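/- arXiv:2105.10546 — 10 statements merged into one kernel-verified Lean document; each statement's English description precedes it below -/
import Mathlib

section
/- The core of a belief function on a finite algebra is non-empty, and Bel is its pointwise minimum: for every belief function Bel on a finite algebra A, the set core(Bel) = {P : P finitely additive probability on A with Bel ≤ P} is non-empty and for every A ∈ A, Bel(A) = min{P(A) : P ∈ core(Bel)}. -/
open scoped Classical

/-- Complete monotonicity of a set function on a family `𝒜` of subsets of `Ω`. -/
def CompletelyMonotone {Ω : Type*} (𝒜 : Set (Set Ω)) (Bel : Set Ω → ℝ) : Prop :=
  ∀ k : ℕ, 2 ≤ k → ∀ A : Fin k → Set Ω, (∀ i, A i ∈ 𝒜) →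
    ∑ I ∈ Finset.univ.powerset.filter (fun I : Finset (Fin k) => I.Nonempty),
      (-1 : ℝ) ^ (I.card + 1) * Bel (⋂ i ∈ I, A i) ≤ Bel (⋃ i, A i)

/-- `P` is a finitely additive probability on the family `𝒜`. -/
def IsFAProb {Ω : Type*} (𝒜 : Set (Set Ω)) (P : Set Ω → ℝ) : Prop :=
  (∀ A ∈ 𝒜, P A ∈ Set.Icc (0 : ℝ) 1) ∧ P ∅ = 0 ∧ P Set.univ = 1 ∧
    ∀ A ∈ 𝒜, ∀ B ∈ 𝒜, A ∩ B = ∅ → P (A ∪ B) = P A + P B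

set_option linter.unusedSectionVars false

namespace BelCore

variable {Ω : Type*}

/-- Generic Möbius inversion over powersets. -/
lemma powerset_inv {α : Type*} (f : Finset α → ℝ) (u : Finset α) :
    ∑ r ∈ u.powerset, ∑ q ∈ r.powerset, (-1:ℝ)^(r.card - q.card) * f q = f u := by
  have key : ∀ q ∈ u.powerset,
      ∑ r ∈ u.powerset, (if q ⊆ r then (-1:ℝ)^(r.card - q.card) * f q else 0)
        = if u \ q = ∅ then f q else 0 := by
    intro q hq
    rw [Finset.mem_powerset] at hq
    rw [Finset.sum_ite, Finset.sum_const_zero, add_zero]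
    have hbij : ∑ r ∈ u.powerset.filter (fun r => q ⊆ r), (-1:ℝ)^(r.card - q.card) * f q
        = ∑ w ∈ (u \ q).powerset, (-1:ℝ)^(w.card) * f q := by
      refine Finset.sum_nbij' (fun r => r \ q) (fun w => q ∪ w) ?_ ?_ ?_ ?_ ?_
      · intro r hr
        simp only [Finset.mem_filter, Finset.mem_powerset] at hr ⊢
        exact fun x hx => Finset.mem_sdiff.2 ⟨hr.1 (Finset.mem_sdiff.1 hx).1, (Finset.mem_sdiff.1 hx).2⟩
      · intro w hw
        simp only [Finset.mem_powerset] at hw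
        simp only [Finset.mem_filter, Finset.mem_powerset]
        exact ⟨Finset.union_subset hq (fun x hx => (Finset.mem_sdiff.1 (hw hx)).1), Finset.subset_union_left⟩
      · intro r hr
        simp only [Finset.mem_filter, Finset.mem_powerset] at hr
        exact Finset.union_sdiff_of_subset hr.2
      · intro w hw
        simp only [Finset.mem_powerset] at hw
        refine Finset.union_sdiff_cancel_left ?_
        exact Finset.disjoint_left.2 fun x hxq hxw => (Finset.mem_sdiff.1 (hw hxw)).2 hxq
      · intro r hr
        simp only [Finset.mem_filter, Finset.mem_powerset] at hr
        rw [Finset.card_sdiff_of_subset hr.2]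
    rw [hbij, ← Finset.sum_mul]
    have : ∑ w ∈ (u \ q).powerset, (-1:ℝ)^(w.card) = if u \ q = ∅ then 1 else 0 := by
      have h := Finset.sum_powerset_neg_one_pow_card (x := u \ q)
      have := congrArg (fun z : ℤ => (z : ℝ)) h
      push_cast at this
      simpa using this
    rw [this]
    split_ifs <;> simp
  calc ∑ r ∈ u.powerset, ∑ q ∈ r.powerset, (-1:ℝ)^(r.card - q.card) * f q
      = ∑ r ∈ u.powerset, ∑ q ∈ u.powerset,
          (if q ⊆ r then (-1:ℝ)^(r.card - q.card) * f q else 0) := by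
        refine Finset.sum_congr rfl fun r hr => ?_
        rw [Finset.mem_powerset] at hr
        rw [Finset.sum_ite, Finset.sum_const_zero, add_zero]
        refine Finset.sum_congr ?_ (fun _ _ => rfl)
        ext q
        simp only [Finset.mem_filter, Finset.mem_powerset]
        exact ⟨fun h => ⟨h.trans hr, h⟩, fun h => h.2⟩
    _ = ∑ q ∈ u.powerset, ∑ r ∈ u.powerset,
          (if q ⊆ r then (-1:ℝ)^(r.card - q.card) * f q else 0) := Finset.sum_comm
    _ = ∑ q ∈ u.powerset, (if u \ q = ∅ then f q else 0) := Finset.sum_congr rfl key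
    _ = f u := by
        rw [Finset.sum_eq_single u]
        · simp
        · intro q hq hne
          rw [Finset.mem_powerset] at hq
          rw [if_neg]
          intro h
          exact hne (Finset.Subset.antisymm hq (Finset.sdiff_eq_empty_iff_subset.1 h))
        · intro h
          exact absurd (Finset.mem_powerset.2 (Finset.Subset.refl u)) h

lemma sum_powerset_split {α : Type*} (u : Finset α) (f : Finset α → ℝ) :
    ∑ r ∈ u.powerset, f r = f ∅ + ∑ r ∈ u.powerset.filter (fun r => r.Nonempty), f r := by
  rw [← Finset.sum_filter_add_sum_filter_not u.powerset (fun r => r.Nonempty) f]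
  rw [show u.powerset.filter (fun r => ¬ r.Nonempty) = {∅} from by
    ext r
    simp only [Finset.mem_filter, Finset.mem_powerset, Finset.not_nonempty_iff_eq_empty,
      Finset.mem_singleton]
    exact ⟨fun h => h.2, fun h => ⟨h ▸ Finset.empty_subset u, h⟩⟩]
  rw [Finset.sum_singleton]
  ring

variable (𝒜 : Finset (Set Ω))

noncomputable def aOf (x : Ω) : Set Ω := ⋂ A ∈ 𝒜.filter (fun A => x ∈ A), A

lemma mem_aOf (x : Ω) : x ∈ aOf 𝒜 x := by
  simp only [aOf, Set.mem_iInter, Finset.mem_filter]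
  exact fun A hA => hA.2

lemma aOf_subset {A : Set Ω} (hA : A ∈ 𝒜) {x : Ω} (hx : x ∈ A) : aOf 𝒜 x ⊆ A := by
  intro y hy
  simp only [aOf, Set.mem_iInter, Finset.mem_filter] at hy
  exact hy A ⟨hA, hx⟩

lemma biInter_mem (hUniv : Set.univ ∈ 𝒜) (hinter : ∀ A ∈ 𝒜, ∀ B ∈ 𝒜, A ∩ B ∈ 𝒜) :
    ∀ f : Finset (Set Ω), (∀ A ∈ f, A ∈ 𝒜) → (⋂ A ∈ f, A) ∈ 𝒜 := by
  intro f
  induction f using Finset.induction_on with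
  | empty => intro _; simpa using hUniv
  | @insert a s ha ih =>
    intro h
    rw [Finset.set_biInter_insert]
    exact hinter a (h a (Finset.mem_insert_self a s)) _
      (ih fun A hA => h A (Finset.mem_insert_of_mem hA))

lemma sUnion_mem (hEmp : ∅ ∈ 𝒜) (hunion : ∀ A ∈ 𝒜, ∀ B ∈ 𝒜, A ∪ B ∈ 𝒜) :
    ∀ f : Finset (Set Ω), (∀ A ∈ f, A ∈ 𝒜) → (⋃₀ ↑f : Set Ω) ∈ 𝒜 := by
  intro f
  induction f using Finset.induction_on with
  | empty => intro _; simpa using hEmp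
  | @insert a s ha ih =>
    intro h
    rw [Finset.coe_insert, Set.sUnion_insert]
    exact hunion a (h a (Finset.mem_insert_self a s)) _
      (ih fun A hA => h A (Finset.mem_insert_of_mem hA))

lemma aOf_mem (hUniv : Set.univ ∈ 𝒜) (hinter : ∀ A ∈ 𝒜, ∀ B ∈ 𝒜, A ∩ B ∈ 𝒜) (x : Ω) :
    aOf 𝒜 x ∈ 𝒜 :=
  biInter_mem 𝒜 hUniv hinter _ (fun A hA => (Finset.mem_filter.1 hA).1)

noncomputable def Atoms : Finset (Set Ω) := 𝒜.filter (fun B => ∃ x, B = aOf 𝒜 x)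

lemma atoms_subset : Atoms 𝒜 ⊆ 𝒜 := Finset.filter_subset _ _

variable (hUniv : Set.univ ∈ 𝒜) (hinter : ∀ A ∈ 𝒜, ∀ B ∈ 𝒜, A ∩ B ∈ 𝒜)
  (hcompl : ∀ A ∈ 𝒜, Aᶜ ∈ 𝒜)

include hUniv hinter in
lemma aOf_mem_atoms (x : Ω) : aOf 𝒜 x ∈ Atoms 𝒜 :=
  Finset.mem_filter.2 ⟨aOf_mem 𝒜 hUniv hinter x, x, rfl⟩

include hUniv hinter hcompl in
lemma atom_eq {t : Set Ω} (ht : t ∈ Atoms 𝒜) {x : Ω} (hx : x ∈ t) : t = aOf 𝒜 x := by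
  obtain ⟨htA, y, rfl⟩ := Finset.mem_filter.1 ht
  apply Set.Subset.antisymm
  · have hy : y ∈ aOf 𝒜 x := by
      by_contra hy
      simp only [aOf, Set.mem_iInter, Finset.mem_filter, not_forall] at hy
      obtain ⟨A, ⟨hA, hxA⟩, hyA⟩ := hy
      have h1 : aOf 𝒜 y ⊆ Aᶜ := aOf_subset 𝒜 (hcompl A hA) hyA
      exact (h1 hx) hxA
    exact aOf_subset 𝒜 (aOf_mem 𝒜 hUniv hinter x) hy
  · exact aOf_subset 𝒜 (aOf_mem 𝒜 hUniv hinter y) hx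

include hUniv hinter hcompl in
lemma atoms_eq_of_mem {t u : Set Ω} (ht : t ∈ Atoms 𝒜) (hu : u ∈ Atoms 𝒜) {x : Ω}
    (hx : x ∈ t) (hx' : x ∈ u) : t = u := by
  rw [atom_eq 𝒜 hUniv hinter hcompl ht hx, atom_eq 𝒜 hUniv hinter hcompl hu hx']

lemma atoms_ne {t : Set Ω} (ht : t ∈ Atoms 𝒜) : t.Nonempty := by
  obtain ⟨_, y, rfl⟩ := Finset.mem_filter.1 ht
  exact ⟨y, mem_aOf 𝒜 y⟩

include hUniv hinter in
lemma eq_sUnion_atoms {A : Set Ω} (hA : A ∈ 𝒜) :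
    A = ⋃₀ ↑((Atoms 𝒜).filter (fun t => t ⊆ A)) := by
  apply Set.Subset.antisymm
  · intro x hx
    refine Set.mem_sUnion.2 ⟨aOf 𝒜 x, ?_, mem_aOf 𝒜 x⟩
    simp only [Finset.coe_filter, Set.mem_setOf_eq]
    exact ⟨aOf_mem_atoms 𝒜 hUniv hinter x, aOf_subset 𝒜 hA hx⟩
  · intro x hx
    obtain ⟨t, ht, hxt⟩ := Set.mem_sUnion.1 hx
    simp only [Finset.coe_filter, Set.mem_setOf_eq] at ht
    exact ht.2 hxt

include hUniv hinter hcompl in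
lemma sUnion_sdiff {s r : Finset (Set Ω)} (hs : s ⊆ Atoms 𝒜) (hr : r ⊆ s) :
    (⋃₀ ↑s : Set Ω) \ ⋃₀ ↑r = ⋃₀ ↑(s \ r) := by
  ext x
  simp only [Set.mem_diff, Set.mem_sUnion, Finset.mem_coe, Finset.mem_sdiff]
  constructor
  · rintro ⟨⟨t, hts, hxt⟩, hnr⟩
    refine ⟨t, ⟨hts, fun htr => hnr ⟨t, htr, hxt⟩⟩, hxt⟩
  · rintro ⟨t, ⟨hts, htr⟩, hxt⟩
    refine ⟨⟨t, hts, hxt⟩, ?_⟩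
    rintro ⟨u, hur, hxu⟩
    exact htr (atoms_eq_of_mem 𝒜 hUniv hinter hcompl (hs hts) (hs (hr hur)) hxt hxu ▸ hur)

variable (Bel : Set Ω → ℝ)

noncomputable def mob (s : Finset (Set Ω)) : ℝ :=
  ∑ r ∈ s.powerset, (-1:ℝ)^(s.card - r.card) * Bel (⋃₀ ↑r)

lemma sum_mob (u : Finset (Set Ω)) :
    ∑ r ∈ u.powerset, mob Bel r = Bel (⋃₀ ↑u) := by
  unfold mob
  exact powerset_inv _ u

variable (hEmp : ∅ ∈ 𝒜) (hunion : ∀ A ∈ 𝒜, ∀ B ∈ 𝒜, A ∪ B ∈ 𝒜)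
  (h01 : ∀ A ∈ 𝒜, Bel A ∈ Set.Icc (0 : ℝ) 1)
  (hB0 : Bel ∅ = 0) (hB1 : Bel Set.univ = 1)
  (hcm : CompletelyMonotone (↑𝒜) Bel)

lemma mob_empty (hB0 : Bel ∅ = 0) : mob Bel ∅ = 0 := by
  simp [mob, hB0]

include hEmp hUniv hcompl hinter hunion h01 hB0 hcm in
lemma mob_nonneg {s : Finset (Set Ω)} (hs : s ⊆ Atoms 𝒜) : 0 ≤ mob Bel s := by
  rcases Nat.lt_or_ge s.card 2 with hk | hk
  · interval_cases h : s.card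
    · rw [Finset.card_eq_zero] at h
      subst h
      simp [mob, hB0]
    · rw [Finset.card_eq_one] at h
      obtain ⟨t, rfl⟩ := h
      have ht : t ∈ 𝒜 := atoms_subset 𝒜 (hs (Finset.mem_singleton_self t))
      have hne : (∅ : Finset (Set Ω)) ∉ ({{t}} : Finset (Finset (Set Ω))) := by
        simp only [Finset.mem_singleton]
        exact fun h => Finset.singleton_ne_empty t h.symm
      have : mob Bel {t} = Bel t := by
        rw [mob, show ({t} : Finset (Set Ω)).powerset = {∅, {t}} from rfl,
          Finset.sum_insert hne, Finset.sum_singleton]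
        simp [hB0]
      rw [this]
      exact (h01 t ht).1
  · set k := s.card with hkdef
    set e : Fin k → Set Ω := fun i => (s.equivFin.symm i : Set Ω) with he
    have he_mem : ∀ i, e i ∈ s := fun i => (s.equivFin.symm i).2
    have he_inj : Function.Injective e := fun i j hij => by
      have := Subtype.ext hij
      exact s.equivFin.symm.injective this
    have he_surj : ∀ t ∈ s, ∃ i, e i = t := fun t ht =>
      ⟨s.equivFin ⟨t, ht⟩, by simp [he]⟩
    set A : Fin k → Set Ω := fun i => (⋃₀ ↑s : Set Ω) \ e i with hA
    have hsU : (⋃₀ ↑s : Set Ω) ∈ 𝒜 :=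
      sUnion_mem 𝒜 hEmp hunion s (fun t ht => atoms_subset 𝒜 (hs ht))
    have hAmem : ∀ i, A i ∈ (↑𝒜 : Set (Set Ω)) := by
      intro i
      simp only [Finset.mem_coe, hA]
      rw [Set.diff_eq]
      exact hinter _ hsU _ (hcompl _ (atoms_subset 𝒜 (hs (he_mem i))))
    have hUnion : ⋃ i, A i = ⋃₀ ↑s := by
      apply Set.Subset.antisymm
      · exact Set.iUnion_subset fun i => Set.diff_subset
      · intro x hx
        obtain ⟨t, hts, hxt⟩ := hx
        obtain ⟨i, hi⟩ : ∃ i : Fin k, e i ≠ t := by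
          by_contra hno
          push_neg at hno
          have h0 : e ⟨0, by omega⟩ = e ⟨1, by omega⟩ := by rw [hno, hno]
          have := he_inj h0
          simp at this
        refine Set.mem_iUnion.2 ⟨i, ⟨⟨t, hts, hxt⟩, ?_⟩⟩
        intro hxe
        exact hi (atoms_eq_of_mem 𝒜 hUniv hinter hcompl (hs (he_mem i)) (hs hts) hxe hxt)
    have hInter : ∀ I : Finset (Fin k), I.Nonempty →
        (⋂ i ∈ I, A i) = ⋃₀ ↑(s \ I.image e) := by
      intro I hI
      have himg : I.image e ⊆ s := fun t ht => by
        obtain ⟨i, _, rfl⟩ := Finset.mem_image.1 ht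
        exact he_mem i
      rw [← sUnion_sdiff 𝒜 hUniv hinter hcompl hs himg]
      ext x
      simp only [Set.mem_iInter, Set.mem_diff, Set.mem_sUnion, Finset.mem_coe,
        Finset.mem_image, hA]
      constructor
      · intro h
        obtain ⟨i0, hi0⟩ := hI
        refine ⟨(h i0 hi0).1, ?_⟩
        rintro ⟨t, ⟨i, hiI, rfl⟩, hxt⟩
        exact (h i hiI).2 hxt
      · rintro ⟨hxs, hn⟩ i hiI
        exact ⟨hxs, fun hxe => hn ⟨e i, ⟨i, hiI, rfl⟩, hxe⟩⟩
    have hre : mob Bel s = ∑ I ∈ (Finset.univ : Finset (Fin k)).powerset,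
        (-1:ℝ)^(I.card) * Bel (⋃₀ ↑(s \ I.image e)) := by
      rw [mob]
      refine (Finset.sum_nbij' (fun I : Finset (Fin k) => s \ I.image e)
        (fun r => Finset.univ.filter (fun i => e i ∉ r)) ?_ ?_ ?_ ?_ ?_).symm
      · intro I _
        exact Finset.mem_powerset.2 (Finset.sdiff_subset)
      · intro r _
        exact Finset.mem_powerset.2 (Finset.filter_subset _ _)
      · intro I _
        ext i
        simp only [Finset.mem_filter, Finset.mem_univ, true_and, Finset.mem_sdiff, not_and,
          not_not]
        constructor
        · intro h
          have := h (he_mem i)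
          obtain ⟨j, hjI, hji⟩ := Finset.mem_image.1 this
          rwa [← he_inj hji]
        · intro hiI _
          exact Finset.mem_image.2 ⟨i, hiI, rfl⟩
      · intro r hr
        rw [Finset.mem_powerset] at hr
        ext t
        constructor
        · intro h
          rw [Finset.mem_sdiff] at h
          obtain ⟨hts, hnim⟩ := h
          obtain ⟨i, rfl⟩ := he_surj t hts
          by_contra htr
          exact hnim (Finset.mem_image.2 ⟨i, Finset.mem_filter.2 ⟨Finset.mem_univ i, htr⟩, rfl⟩)
        · intro htr
          rw [Finset.mem_sdiff]
          refine ⟨hr htr, fun him => ?_⟩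
          obtain ⟨i, hi, rfl⟩ := Finset.mem_image.1 him
          exact (Finset.mem_filter.1 hi).2 htr
      · intro I hI
        rw [Finset.mem_powerset] at hI
        have h1 : (I.image e).card = I.card := Finset.card_image_of_injective I he_inj
        have h2 : (s \ I.image e).card = s.card - I.card := by
          rw [Finset.card_sdiff_of_subset (fun t ht => by
            obtain ⟨i, _, rfl⟩ := Finset.mem_image.1 ht; exact he_mem i), h1]
        have h3 : I.card ≤ s.card := le_trans (Finset.card_le_card hI) (by simp [hkdef])
        rw [h2, Nat.sub_sub_self h3]
    have hsplit : ∑ I ∈ (Finset.univ : Finset (Fin k)).powerset,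
        (-1:ℝ)^(I.card) * Bel (⋃₀ ↑(s \ I.image e))
        = (∑ I ∈ (Finset.univ : Finset (Fin k)).powerset.filter (fun I => I.Nonempty),
            (-1:ℝ)^(I.card) * Bel (⋃₀ ↑(s \ I.image e))) + Bel (⋃₀ ↑s) := by
      rw [← Finset.sum_filter_add_sum_filter_not _ (fun I : Finset (Fin k) => I.Nonempty)]
      congr 1
      have : (Finset.univ : Finset (Fin k)).powerset.filter (fun I => ¬ I.Nonempty)
          = {∅} := by
        ext I
        simp [Finset.not_nonempty_iff_eq_empty]
      rw [this, Finset.sum_singleton]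
      simp
    have hcmapp := hcm k hk A hAmem
    rw [hUnion] at hcmapp
    have hsum : ∑ I ∈ (Finset.univ : Finset (Fin k)).powerset.filter
          (fun I : Finset (Fin k) => I.Nonempty),
        (-1:ℝ)^(I.card + 1) * Bel (⋂ i ∈ I, A i)
        = - ∑ I ∈ (Finset.univ : Finset (Fin k)).powerset.filter (fun I => I.Nonempty),
            (-1:ℝ)^(I.card) * Bel (⋃₀ ↑(s \ I.image e)) := by
      rw [← Finset.sum_neg_distrib]
      refine Finset.sum_congr rfl fun I hI => ?_
      rw [Finset.mem_filter] at hI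
      rw [hInter I hI.2, pow_succ]
      ring
    rw [hsum] at hcmapp
    rw [hre, hsplit]
    linarith

include hEmp hUniv hcompl hinter hunion h01 hB0 hB1 hcm in
lemma core_point [Nonempty Ω] {A₀ : Set Ω} (hA₀ : A₀ ∈ 𝒜) :
    ∃ P : Set Ω → ℝ, IsFAProb (↑𝒜) P ∧ (∀ B ∈ 𝒜, Bel B ≤ P B) ∧ P A₀ = Bel A₀ := by
  classical
  set At := Atoms 𝒜 with hAt
  have hmobnn : ∀ {s : Finset (Set Ω)}, s ⊆ At → 0 ≤ mob Bel s :=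
    fun {s} hs => mob_nonneg 𝒜 hUniv hinter hcompl Bel hEmp hunion h01 hB0 hcm hs
  have pick_ex : ∀ s : Finset (Set Ω), s.Nonempty → s ⊆ At → (⋃₀ ↑s : Set Ω).Nonempty := by
    intro s hs hsub
    obtain ⟨t, ht⟩ := hs
    obtain ⟨x, hx⟩ := atoms_ne 𝒜 (hsub ht)
    exact ⟨x, t, ht, hx⟩
  have pickspec : ∀ s : Finset (Set Ω), s.Nonempty ∧ s ⊆ At →
      ∃ x : Ω, x ∈ (⋃₀ ↑s : Set Ω) ∧ ((⋃₀ ↑s : Set Ω) ⊆ A₀ ∨ x ∉ A₀) := by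
    intro s hs
    by_cases h : (⋃₀ ↑s : Set Ω) ⊆ A₀
    · obtain ⟨x, hx⟩ := pick_ex s hs.1 hs.2
      exact ⟨x, hx, Or.inl h⟩
    · obtain ⟨x, hx⟩ := Set.diff_nonempty.2 h
      exact ⟨x, hx.1, Or.inr hx.2⟩
  set pick : Finset (Set Ω) → Ω := fun s =>
    if h : s.Nonempty ∧ s ⊆ At then (pickspec s h).choose else Classical.arbitrary Ω with hpick
  have pick_mem : ∀ s : Finset (Set Ω), s.Nonempty → s ⊆ At →
      pick s ∈ (⋃₀ ↑s : Set Ω) := by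
    intro s h1 h2
    simp only [hpick]
    rw [dif_pos ⟨h1, h2⟩]
    exact (pickspec s ⟨h1, h2⟩).choose_spec.1
  have pick_or : ∀ s : Finset (Set Ω), s.Nonempty → s ⊆ At →
      (⋃₀ ↑s : Set Ω) ⊆ A₀ ∨ pick s ∉ A₀ := by
    intro s h1 h2
    simp only [hpick]
    rw [dif_pos ⟨h1, h2⟩]
    exact (pickspec s ⟨h1, h2⟩).choose_spec.2
  set P : Set Ω → ℝ := fun C =>
    ∑ s ∈ At.powerset.filter (fun s => s.Nonempty),
      (if pick s ∈ C then mob Bel s else 0) with hP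
  have hAtU : ⋃₀ ↑At = (Set.univ : Set Ω) := by
    have h3 := (eq_sUnion_atoms 𝒜 hUniv hinter hUniv).symm
    rwa [Finset.filter_true_of_mem (fun t _ => Set.subset_univ t)] at h3
  have htotal : ∑ s ∈ At.powerset.filter (fun s => s.Nonempty), mob Bel s = 1 := by
    have h1 := sum_mob Bel At
    rw [hAtU, hB1, sum_powerset_split At (mob Bel), mob_empty Bel hB0] at h1
    linarith
  have hform : ∀ C : Set Ω, P C =
      ∑ s ∈ At.powerset.filter (fun s => s.Nonempty ∧ pick s ∈ C), mob Bel s := by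
    intro C
    simp only [hP]
    rw [Finset.sum_filter, Finset.sum_filter]
    refine Finset.sum_congr rfl fun s _ => ?_
    by_cases h1 : s.Nonempty <;> by_cases h2 : pick s ∈ C <;> simp [h1, h2]
  have hBelEq : ∀ C ∈ 𝒜, Bel C =
      ∑ r ∈ ((At.filter (fun t => t ⊆ C)).powerset.filter (fun r => r.Nonempty)),
        mob Bel r := by
    intro C hC
    have h1 := sum_mob Bel (At.filter (fun t => t ⊆ C))
    rw [← eq_sUnion_atoms 𝒜 hUniv hinter hC,
      sum_powerset_split _ (mob Bel), mob_empty Bel hB0] at h1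
    linarith
  have hdom : ∀ C ∈ 𝒜, Bel C ≤ P C := by
    intro C hC
    rw [hform C, hBelEq C hC]
    apply Finset.sum_le_sum_of_subset_of_nonneg
    · intro s hsmem
      simp only [Finset.mem_filter, Finset.mem_powerset] at hsmem ⊢
      obtain ⟨hsub, hne⟩ := hsmem
      have hsub_At : s ⊆ At := hsub.trans (Finset.filter_subset _ _)
      refine ⟨hsub_At, hne, ?_⟩
      obtain ⟨t, hts, hxt⟩ := pick_mem s hne hsub_At
      exact (Finset.mem_filter.1 (hsub hts)).2 hxt
    · intro s hsmem _
      simp only [Finset.mem_filter, Finset.mem_powerset] at hsmem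
      exact hmobnn hsmem.1
  have heq : P A₀ = Bel A₀ := by
    rw [hform A₀, hBelEq A₀ hA₀]
    refine Finset.sum_congr ?_ (fun _ _ => rfl)
    ext s
    simp only [Finset.mem_filter, Finset.mem_powerset]
    constructor
    · rintro ⟨hsAt, hne, hpA⟩
      have hUsub : (⋃₀ ↑s : Set Ω) ⊆ A₀ := by
        rcases pick_or s hne hsAt with h | h
        · exact h
        · exact absurd hpA h
      exact ⟨fun t ht => Finset.mem_filter.2 ⟨hsAt ht, fun x hx => hUsub ⟨t, ht, hx⟩⟩, hne⟩
    · rintro ⟨hsub, hne⟩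
      have hsub_At : s ⊆ At := hsub.trans (Finset.filter_subset _ _)
      have hUsub : (⋃₀ ↑s : Set Ω) ⊆ A₀ := by
        rintro x ⟨t, ht, hx⟩
        exact (Finset.mem_filter.1 (hsub ht)).2 hx
      exact ⟨hsub_At, hne, hUsub (pick_mem s hne hsub_At)⟩
  have hadd : ∀ A B : Set Ω, A ∩ B = ∅ → P (A ∪ B) = P A + P B := by
    intro A B hAB
    simp only [hP]
    rw [← Finset.sum_add_distrib]
    refine Finset.sum_congr rfl fun s _ => ?_
    by_cases hA : pick s ∈ A
    · have hB : pick s ∉ B := fun hB => by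
        have hmem : pick s ∈ A ∩ B := ⟨hA, hB⟩
        rw [hAB] at hmem
        exact hmem
      simp [Set.mem_union, hA, hB]
    · by_cases hB : pick s ∈ B <;> simp [Set.mem_union, hA, hB]
  have hP0 : P ∅ = 0 := by simp [hP]
  have hP1 : P Set.univ = 1 := by
    rw [hform Set.univ]
    refine Eq.trans (Finset.sum_congr ?_ (fun _ _ => rfl)) htotal
    ext s
    simp [Set.mem_univ]
  have hPnn : ∀ C : Set Ω, 0 ≤ P C := by
    intro C
    rw [hform C]
    refine Finset.sum_nonneg fun s hs => ?_
    simp only [Finset.mem_filter, Finset.mem_powerset] at hs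
    exact hmobnn hs.1
  have hPle : ∀ C : Set Ω, P C ≤ 1 := by
    intro C
    rw [hform C, ← htotal]
    apply Finset.sum_le_sum_of_subset_of_nonneg
    · intro s hs
      simp only [Finset.mem_filter, Finset.mem_powerset] at hs ⊢
      exact ⟨hs.1, hs.2.1⟩
    · intro s hs _
      simp only [Finset.mem_filter, Finset.mem_powerset] at hs
      exact hmobnn hs.1
  exact ⟨P, ⟨fun C _ => ⟨hPnn C, hPle C⟩, hP0, hP1,
    fun A _ B _ h => hadd A B h⟩, hdom, heq⟩

end BelCore

theorem stmt_5 {Ω : Type*} [Nonempty Ω] (𝒜 : Finset (Set Ω))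
    (hEmp : ∅ ∈ 𝒜) (hUniv : Set.univ ∈ 𝒜)
    (hcompl : ∀ A ∈ 𝒜, Aᶜ ∈ 𝒜)
    (hinter : ∀ A ∈ 𝒜, ∀ B ∈ 𝒜, A ∩ B ∈ 𝒜)
    (hunion : ∀ A ∈ 𝒜, ∀ B ∈ 𝒜, A ∪ B ∈ 𝒜)
    (Bel : Set Ω → ℝ)
    (h01 : ∀ A ∈ 𝒜, Bel A ∈ Set.Icc (0 : ℝ) 1)
    (hB0 : Bel ∅ = 0) (hB1 : Bel Set.univ = 1)
    (hcm : CompletelyMonotone (↑𝒜) Bel) :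
    (∃ P : Set Ω → ℝ, IsFAProb (↑𝒜) P ∧ ∀ A ∈ 𝒜, Bel A ≤ P A) ∧
      ∀ A ∈ 𝒜,
        (∀ P : Set Ω → ℝ, IsFAProb (↑𝒜) P → (∀ B ∈ 𝒜, Bel B ≤ P B) → Bel A ≤ P A) ∧
        ∃ P : Set Ω → ℝ, IsFAProb (↑𝒜) P ∧ (∀ B ∈ 𝒜, Bel B ≤ P B) ∧ P A = Bel A := by
  have hcore := fun {A₀ : Set Ω} (hA₀ : A₀ ∈ 𝒜) =>
    BelCore.core_point 𝒜 hUniv hinter hcompl Bel hEmp hunion h01 hB0 hB1 hcm hA₀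
  constructor
  · obtain ⟨P, hPprob, hPdom, _⟩ := hcore hUniv
    exact ⟨P, hPprob, hPdom⟩
  · intro A hA
    refine ⟨fun P _ hdom => hdom A hA, ?_⟩
    obtain ⟨P, hPprob, hPdom, hPeq⟩ := hcore hA
    exact ⟨P, hPprob, hPdom, hPeq⟩
end

section
/- Integral (convex-combination) representation of belief functions on a finite algebra: for every belief function Bel on a finite algebra A with U = A∖{∅}, there exists a probability distribution μ on U such that for every A ∈ A, Bel(A) = Σ_{B∈U} (min_{ω∈B} 1_A(ω)) μ({B}); conversely, every such convex combination of unanimity games is a belief function. Moreover, this correspondence is a bijection between belief functions on A and probability distributions on U. -/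
open scoped Classical

/-- `Bel` is a belief function on the family `𝒜`. -/
def IsBelief {Ω : Type*} (𝒜 : Set (Set Ω)) (Bel : Set Ω → ℝ) : Prop :=
  (∀ A ∈ 𝒜, Bel A ∈ Set.Icc (0 : ℝ) 1) ∧ Bel ∅ = 0 ∧ Bel Set.univ = 1 ∧
    CompletelyMonotone 𝒜 Bel

/-- `μ` is a probability distribution on `U`. -/
def IsProbDistOn {Ω : Type*} (U : Finset (Set Ω)) (μ : Set Ω → ℝ) : Prop :=
  (∀ B ∈ U, 0 ≤ μ B) ∧ ∑ B ∈ U, μ B = 1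

open Finset
namespace BeliefProofAux


lemma neg_one_pow_sub_real {a b : ℕ} (h : b ≤ a) :
    ((-1:ℝ))^(a-b) = (-1)^a * (-1)^b := by
  have h1 : ((-1:ℝ))^(a-b) * (-1)^b = (-1)^a := by
    rw [← pow_add, Nat.sub_add_cancel h]
  have hb : ((-1:ℝ))^b * (-1)^b = 1 := by
    rw [← pow_add, ← two_mul, pow_mul]; norm_num
  calc ((-1:ℝ))^(a-b) = (-1)^(a-b) * ((-1)^b * (-1)^b) := by rw [hb, mul_one]
    _ = ((-1)^(a-b) * (-1)^b) * (-1)^b := by ring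
    _ = (-1)^a * (-1)^b := by rw [h1]

lemma sum_powerset_neg_one_real {α : Type*} (T : Finset α) :
    ∑ S ∈ T.powerset, (-1:ℝ)^S.card = if T = ∅ then 1 else 0 := by
  classical
  have h := Finset.sum_powerset_neg_one_pow_card (x := T)
  have : ((∑ S ∈ T.powerset, (-1:ℤ)^S.card : ℤ) : ℝ)
      = ∑ S ∈ T.powerset, (-1:ℝ)^S.card := by push_cast; rfl
  rw [← this, h]
  split_ifs <;> norm_num

lemma sum_between {α : Type*} [DecidableEq α] (T S : Finset α) (hS : S ⊆ T) :
    ∑ R ∈ T.powerset.filter (fun R => S ⊆ R), (-1:ℝ)^(R.card - S.card)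
      = if S = T then 1 else 0 := by
  have key : ∑ R ∈ T.powerset.filter (fun R => S ⊆ R), (-1:ℝ)^(R.card - S.card)
      = ∑ Q ∈ (T \ S).powerset, (-1:ℝ)^Q.card := by
    refine Finset.sum_nbij' (fun R => R \ S) (fun Q => S ∪ Q) ?_ ?_ ?_ ?_ ?_
    · intro R hR
      rw [mem_filter, mem_powerset] at hR
      rw [mem_powerset]
      exact sdiff_subset_sdiff hR.1 (le_refl S)
    · intro Q hQ
      rw [mem_powerset] at hQ
      rw [mem_filter, mem_powerset]
      exact ⟨union_subset hS (hQ.trans (sdiff_subset)), subset_union_left⟩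
    · intro R hR
      rw [mem_filter] at hR
      exact union_sdiff_of_subset hR.2
    · intro Q hQ
      rw [mem_powerset] at hQ
      rw [union_sdiff_cancel_left]
      exact disjoint_sdiff.mono_right hQ
    · intro R hR
      rw [mem_filter] at hR
      congr 1
      exact (card_sdiff_of_subset hR.2).symm
  rw [key, sum_powerset_neg_one_real]
  by_cases h : S = T
  · simp [h]
  · rw [if_neg h, if_neg]
    rw [sdiff_eq_empty_iff_subset]
    exact fun hTS => h ((hTS.antisymm hS).symm)

lemma mobius_inv {α : Type*} [DecidableEq α] (T : Finset α) (f : Finset α → ℝ) :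
    ∑ R ∈ T.powerset, ∑ S ∈ R.powerset, (-1:ℝ)^(R.card - S.card) * f S = f T := by
  have step1 : ∀ R ∈ T.powerset, ∑ S ∈ R.powerset, (-1:ℝ)^(R.card - S.card) * f S
      = ∑ S ∈ T.powerset, if S ⊆ R then (-1:ℝ)^(R.card - S.card) * f S else 0 := by
    intro R hR
    rw [mem_powerset] at hR
    rw [← Finset.sum_filter]
    congr 1
    ext S
    simp only [mem_filter, mem_powerset]
    exact ⟨fun h => ⟨h.trans hR, h⟩, fun h => h.2⟩
  rw [Finset.sum_congr rfl step1, Finset.sum_comm]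
  have step2 : ∀ S ∈ T.powerset,
      (∑ R ∈ T.powerset, if S ⊆ R then (-1:ℝ)^(R.card - S.card) * f S else 0)
      = (if S = T then 1 else 0) * f S := by
    intro S hS
    rw [mem_powerset] at hS
    rw [← Finset.sum_filter, ← Finset.sum_mul, sum_between T S hS]
  rw [Finset.sum_congr rfl step2]
  rw [Finset.sum_eq_single T]
  · simp
  · intro S hS hne; simp [hne]
  · intro h; simp at h



variable {Ω : Type*}

lemma sUnion_mem (𝒜 : Finset (Set Ω)) (hEmp : ∅ ∈ 𝒜)
    (hunion : ∀ A ∈ 𝒜, ∀ B ∈ 𝒜, A ∪ B ∈ 𝒜) :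
    ∀ S : Finset (Set Ω), S ⊆ 𝒜 → ⋃₀ ↑S ∈ 𝒜 := by
  intro S
  induction S using Finset.induction_on with
  | empty => intro _; simpa using hEmp
  | @insert A S' hA ih =>
    intro hsub
    rw [coe_insert, Set.sUnion_insert]
    exact hunion _ (hsub (mem_insert_self _ _)) _
      (ih fun x hx => hsub (mem_insert_of_mem hx))

lemma sInter_mem (𝒜 : Finset (Set Ω)) (hUniv : Set.univ ∈ 𝒜)
    (hinter : ∀ A ∈ 𝒜, ∀ B ∈ 𝒜, A ∩ B ∈ 𝒜) :
    ∀ S : Finset (Set Ω), S ⊆ 𝒜 → ⋂₀ ↑S ∈ 𝒜 := by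
  intro S
  induction S using Finset.induction_on with
  | empty => intro _; simpa using hUniv
  | @insert A S' hA ih =>
    intro hsub
    rw [coe_insert, Set.sInter_insert]
    exact hinter _ (hsub (mem_insert_self _ _)) _
      (ih fun x hx => hsub (mem_insert_of_mem hx))

/-- The atoms of the finite algebra. -/
noncomputable def Atoms (𝒜 : Finset (Set Ω)) : Finset (Set Ω) :=
  𝒜.filter (fun C => C ≠ ∅ ∧ ∀ D ∈ 𝒜, D ⊆ C → D = ∅ ∨ D = C)

lemma Atoms_subset (𝒜 : Finset (Set Ω)) : Atoms 𝒜 ⊆ 𝒜 := filter_subset _ _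

lemma Atoms_ne_empty {𝒜 : Finset (Set Ω)} {C : Set Ω} (hC : C ∈ Atoms 𝒜) : C ≠ ∅ :=
  (mem_filter.1 hC).2.1

lemma Atoms_min {𝒜 : Finset (Set Ω)} {C D : Set Ω} (hC : C ∈ Atoms 𝒜)
    (hD : D ∈ 𝒜) (hDC : D ⊆ C) : D = ∅ ∨ D = C :=
  (mem_filter.1 hC).2.2 D hD hDC

lemma atoms_disjoint {𝒜 : Finset (Set Ω)} (hinter : ∀ A ∈ 𝒜, ∀ B ∈ 𝒜, A ∩ B ∈ 𝒜)
    {C D : Set Ω} (hC : C ∈ Atoms 𝒜) (hD : D ∈ Atoms 𝒜) (hne : C ≠ D) :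
    C ∩ D = ∅ := by
  have hmem : C ∩ D ∈ 𝒜 := hinter _ (Atoms_subset 𝒜 hC) _ (Atoms_subset 𝒜 hD)
  rcases Atoms_min hC hmem Set.inter_subset_left with h | h
  · exact h
  · -- C ∩ D = C, so C ⊆ D
    have hCD : C ⊆ D := by rw [← h]; exact Set.inter_subset_right
    rcases Atoms_min hD (Atoms_subset 𝒜 hC) hCD with h' | h'
    · exact absurd h' (Atoms_ne_empty hC)
    · exact absurd h' hne

/-- The atom containing a point. -/
noncomputable def atOf (𝒜 : Finset (Set Ω)) (ω : Ω) : Set Ω :=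
  ⋂₀ ↑(𝒜.filter (fun A => ω ∈ A))

lemma mem_atOf (𝒜 : Finset (Set Ω)) (ω : Ω) : ω ∈ atOf 𝒜 ω := by
  intro A hA
  rw [Finset.mem_coe, mem_filter] at hA
  exact hA.2

lemma atOf_subset {𝒜 : Finset (Set Ω)} {ω : Ω} {A : Set Ω} (hA : A ∈ 𝒜) (hω : ω ∈ A) :
    atOf 𝒜 ω ⊆ A :=
  Set.sInter_subset_of_mem (by rw [Finset.mem_coe, mem_filter]; exact ⟨hA, hω⟩)

lemma atOf_mem (𝒜 : Finset (Set Ω)) (hUniv : Set.univ ∈ 𝒜)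
    (hinter : ∀ A ∈ 𝒜, ∀ B ∈ 𝒜, A ∩ B ∈ 𝒜) (ω : Ω) : atOf 𝒜 ω ∈ 𝒜 :=
  sInter_mem 𝒜 hUniv hinter _ (filter_subset _ _)

lemma atOf_eq_of_mem (𝒜 : Finset (Set Ω)) (hcompl : ∀ A ∈ 𝒜, Aᶜ ∈ 𝒜)
    {ω ω' : Ω} (h : ω' ∈ atOf 𝒜 ω) : atOf 𝒜 ω' = atOf 𝒜 ω := by
  have key : ∀ A ∈ 𝒜, ω' ∈ A → ω ∈ A := by
    intro A hA hω'
    by_contra hω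
    have h1 : atOf 𝒜 ω ⊆ Aᶜ := atOf_subset (hcompl A hA) hω
    exact (h1 h) hω'
  apply Set.Subset.antisymm
  · intro x hx
    intro A hA
    rw [Finset.mem_coe, mem_filter] at hA
    exact atOf_subset hA.1 (atOf_subset hA.1 hA.2 h) hx
  · intro x hx
    intro A hA
    rw [Finset.mem_coe, mem_filter] at hA
    exact atOf_subset hA.1 (key A hA.1 hA.2) hx

lemma atOf_mem_Atoms (𝒜 : Finset (Set Ω)) (hUniv : Set.univ ∈ 𝒜)
    (hcompl : ∀ A ∈ 𝒜, Aᶜ ∈ 𝒜) (hinter : ∀ A ∈ 𝒜, ∀ B ∈ 𝒜, A ∩ B ∈ 𝒜) (ω : Ω) :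
    atOf 𝒜 ω ∈ Atoms 𝒜 := by
  rw [Atoms, mem_filter]
  refine ⟨atOf_mem 𝒜 hUniv hinter ω, ?_, ?_⟩
  · exact Set.nonempty_iff_ne_empty.1 ⟨ω, mem_atOf 𝒜 ω⟩
  · intro D hD hDsub
    rcases Set.eq_empty_or_nonempty D with h | ⟨ω', hω'⟩
    · exact Or.inl h
    · right
      have h1 : atOf 𝒜 ω' ⊆ D := atOf_subset hD hω'
      have h2 : atOf 𝒜 ω' = atOf 𝒜 ω := atOf_eq_of_mem 𝒜 hcompl (hDsub hω')
      exact hDsub.antisymm (h2 ▸ h1)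

/-- The set of atoms below `B`. -/
noncomputable def TOf (𝒜 : Finset (Set Ω)) (B : Set Ω) : Finset (Set Ω) :=
  (Atoms 𝒜).filter (fun C => C ⊆ B)

lemma TOf_subset_Atoms (𝒜 : Finset (Set Ω)) (B : Set Ω) : TOf 𝒜 B ⊆ Atoms 𝒜 :=
  filter_subset _ _

lemma mem_TOf {𝒜 : Finset (Set Ω)} {B C : Set Ω} :
    C ∈ TOf 𝒜 B ↔ C ∈ Atoms 𝒜 ∧ C ⊆ B := mem_filter

lemma cover (𝒜 : Finset (Set Ω)) (hUniv : Set.univ ∈ 𝒜)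
    (hcompl : ∀ A ∈ 𝒜, Aᶜ ∈ 𝒜) (hinter : ∀ A ∈ 𝒜, ∀ B ∈ 𝒜, A ∩ B ∈ 𝒜)
    {B : Set Ω} (hB : B ∈ 𝒜) : B = ⋃₀ ↑(TOf 𝒜 B) := by
  apply Set.Subset.antisymm
  · intro ω hω
    exact Set.mem_sUnion.2 ⟨atOf 𝒜 ω, by
      rw [Finset.mem_coe, mem_TOf]
      exact ⟨atOf_mem_Atoms 𝒜 hUniv hcompl hinter ω, atOf_subset hB hω⟩,
      mem_atOf 𝒜 ω⟩
  · intro ω hω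
    rcases Set.mem_sUnion.1 hω with ⟨C, hC, hωC⟩
    rw [Finset.mem_coe, mem_TOf] at hC
    exact hC.2 hωC

lemma TOf_sUnion (𝒜 : Finset (Set Ω)) (hinter : ∀ A ∈ 𝒜, ∀ B ∈ 𝒜, A ∩ B ∈ 𝒜)
    {S : Finset (Set Ω)} (hS : S ⊆ Atoms 𝒜) : TOf 𝒜 (⋃₀ ↑S) = S := by
  ext C
  rw [mem_TOf]
  constructor
  · rintro ⟨hC, hsub⟩
    rcases Set.nonempty_iff_ne_empty.2 (Atoms_ne_empty hC) with ⟨ω, hω⟩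
    rcases Set.mem_sUnion.1 (hsub hω) with ⟨D, hD, hωD⟩
    rw [Finset.mem_coe] at hD
    by_contra hCS
    have hne : C ≠ D := fun h => hCS (h ▸ hD)
    have := atoms_disjoint hinter hC (hS hD) hne
    exact absurd this (Set.nonempty_iff_ne_empty.1 ⟨ω, hω, hωD⟩)
  · intro hC
    exact ⟨hS hC, Set.subset_sUnion_of_mem (Finset.mem_coe.2 hC)⟩

lemma subset_iff_TOf (𝒜 : Finset (Set Ω)) (hUniv : Set.univ ∈ 𝒜)
    (hcompl : ∀ A ∈ 𝒜, Aᶜ ∈ 𝒜) (hinter : ∀ A ∈ 𝒜, ∀ B ∈ 𝒜, A ∩ B ∈ 𝒜)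
    {A B : Set Ω} (hA : A ∈ 𝒜) (hB : B ∈ 𝒜) :
    B ⊆ A ↔ TOf 𝒜 B ⊆ TOf 𝒜 A := by
  constructor
  · intro h C hC
    rw [mem_TOf] at hC ⊢
    exact ⟨hC.1, hC.2.trans h⟩
  · intro h
    calc B = ⋃₀ ↑(TOf 𝒜 B) := cover 𝒜 hUniv hcompl hinter hB
      _ ⊆ ⋃₀ ↑(TOf 𝒜 A) := Set.sUnion_subset_sUnion (by exact_mod_cast h)
      _ = A := (cover 𝒜 hUniv hcompl hinter hA).symm





variable {Ω : Type*}

/-- The Möbius transform of `Bel`. -/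
noncomputable def muOf (𝒜 : Finset (Set Ω)) (Bel : Set Ω → ℝ) (B : Set Ω) : ℝ :=
  ∑ S ∈ (TOf 𝒜 B).powerset, (-1:ℝ)^((TOf 𝒜 B).card - S.card) * Bel (⋃₀ ↑S)

section Main

variable (𝒜 : Finset (Set Ω)) (hEmp : ∅ ∈ 𝒜) (hUniv : Set.univ ∈ 𝒜)
    (hcompl : ∀ A ∈ 𝒜, Aᶜ ∈ 𝒜)
    (hinter : ∀ A ∈ 𝒜, ∀ B ∈ 𝒜, A ∩ B ∈ 𝒜)
    (hunion : ∀ A ∈ 𝒜, ∀ B ∈ 𝒜, A ∪ B ∈ 𝒜)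

include hEmp hUniv hcompl hinter hunion in
lemma filter_eq_image {A : Set Ω} (hA : A ∈ 𝒜) :
    (𝒜.erase ∅).filter (fun B => B ⊆ A)
      = ((TOf 𝒜 A).powerset.filter (fun R => R.Nonempty)).image (fun R : Finset (Set Ω) => ⋃₀ (R : Set (Set Ω))) := by
  ext B
  rw [mem_filter, Finset.mem_erase, mem_image]
  constructor
  · rintro ⟨⟨hBne, hB𝒜⟩, hBA⟩
    refine ⟨TOf 𝒜 B, ?_, (cover 𝒜 hUniv hcompl hinter hB𝒜).symm⟩
    rw [mem_filter, mem_powerset]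
    refine ⟨(subset_iff_TOf 𝒜 hUniv hcompl hinter hA hB𝒜).1 hBA, ?_⟩
    rw [Finset.nonempty_iff_ne_empty]
    intro h
    apply hBne
    rw [cover 𝒜 hUniv hcompl hinter hB𝒜, h]
    simp
  · rintro ⟨R, hR, rfl⟩
    rw [mem_filter, mem_powerset] at hR
    obtain ⟨hRsub, hRne⟩ := hR
    have hRatoms : R ⊆ Atoms 𝒜 := hRsub.trans (TOf_subset_Atoms 𝒜 A)
    have hR𝒜 : (R : Finset (Set Ω)) ⊆ 𝒜 := hRatoms.trans (Atoms_subset 𝒜)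
    refine ⟨⟨?_, sUnion_mem 𝒜 hEmp hunion R hR𝒜⟩, ?_⟩
    · rcases hRne with ⟨C, hC⟩
      rcases Set.nonempty_iff_ne_empty.2 (Atoms_ne_empty (hRatoms hC)) with ⟨ω, hω⟩
      exact Set.nonempty_iff_ne_empty.1 ⟨ω, Set.mem_sUnion.2 ⟨C, Finset.mem_coe.2 hC, hω⟩⟩
    · apply Set.sUnion_subset
      intro C hC
      rw [Finset.mem_coe] at hC
      exact (mem_TOf.1 (hRsub hC)).2

include hEmp hUniv hcompl hinter hunion in
lemma representation (Bel : Set Ω → ℝ) (hBel0 : Bel ∅ = 0) {A : Set Ω} (hA : A ∈ 𝒜) :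
    ∑ B ∈ 𝒜.erase ∅, (if B ⊆ A then (1:ℝ) else 0) * muOf 𝒜 Bel B = Bel A := by
  have step0 : ∑ B ∈ 𝒜.erase ∅, (if B ⊆ A then (1:ℝ) else 0) * muOf 𝒜 Bel B
      = ∑ B ∈ (𝒜.erase ∅).filter (fun B => B ⊆ A), muOf 𝒜 Bel B := by
    rw [Finset.sum_filter]
    apply Finset.sum_congr rfl
    intro B _
    split_ifs <;> simp
  rw [step0, filter_eq_image 𝒜 hEmp hUniv hcompl hinter hunion hA]
  rw [Finset.sum_image]
  swap
  · intro R hR Q hQ h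
    rw [Finset.mem_coe, mem_filter, mem_powerset] at hR hQ
    have hR' : R ⊆ Atoms 𝒜 := hR.1.trans (TOf_subset_Atoms 𝒜 A)
    have hQ' : Q ⊆ Atoms 𝒜 := hQ.1.trans (TOf_subset_Atoms 𝒜 A)
    calc R = TOf 𝒜 (⋃₀ ↑R) := (TOf_sUnion 𝒜 hinter hR').symm
      _ = TOf 𝒜 (⋃₀ ↑Q) := congrArg (TOf 𝒜) h
      _ = Q := TOf_sUnion 𝒜 hinter hQ'
  have step2 : ∀ R ∈ (TOf 𝒜 A).powerset.filter (fun R => R.Nonempty),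
      muOf 𝒜 Bel (⋃₀ ↑R) = ∑ S ∈ R.powerset, (-1:ℝ)^(R.card - S.card) * Bel (⋃₀ ↑S) := by
    intro R hR
    rw [mem_filter, mem_powerset] at hR
    have hR' : R ⊆ Atoms 𝒜 := hR.1.trans (TOf_subset_Atoms 𝒜 A)
    rw [muOf, TOf_sUnion 𝒜 hinter hR']
  rw [Finset.sum_congr rfl step2]
  -- add back the empty set term, which vanishes
  have hfilter : (TOf 𝒜 A).powerset.filter (fun R => R.Nonempty)
      = ((TOf 𝒜 A).powerset).erase ∅ := by
    ext R
    rw [mem_filter, Finset.mem_erase, Finset.nonempty_iff_ne_empty, and_comm]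
  rw [hfilter]
  have hmem : (∅ : Finset (Set Ω)) ∈ (TOf 𝒜 A).powerset := mem_powerset.2 (empty_subset _)
  have := Finset.sum_erase_add ((TOf 𝒜 A).powerset)
    (fun R => ∑ S ∈ R.powerset, (-1:ℝ)^(R.card - S.card) * Bel (⋃₀ ↑S)) hmem
  have hemptyterm : ∑ S ∈ (∅ : Finset (Set Ω)).powerset,
      (-1:ℝ)^((∅ : Finset (Set Ω)).card - S.card) * Bel (⋃₀ ↑S) = 0 := by
    simp [hBel0]
  have key : ∑ R ∈ ((TOf 𝒜 A).powerset).erase ∅,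
      ∑ S ∈ R.powerset, (-1:ℝ)^(R.card - S.card) * Bel (⋃₀ ↑S)
      = ∑ R ∈ (TOf 𝒜 A).powerset,
      ∑ S ∈ R.powerset, (-1:ℝ)^(R.card - S.card) * Bel (⋃₀ ↑S) := by
    rw [← this]
    simp [hBel0]
  rw [key, mobius_inv (TOf 𝒜 A) (fun S => Bel (⋃₀ ↑S))]
  exact congrArg Bel (cover 𝒜 hUniv hcompl hinter hA).symm

end Main




variable {Ω : Type*}

section Main

variable (𝒜 : Finset (Set Ω)) (hEmp : ∅ ∈ 𝒜) (hUniv : Set.univ ∈ 𝒜)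
    (hcompl : ∀ A ∈ 𝒜, Aᶜ ∈ 𝒜)
    (hinter : ∀ A ∈ 𝒜, ∀ B ∈ 𝒜, A ∩ B ∈ 𝒜)
    (hunion : ∀ A ∈ 𝒜, ∀ B ∈ 𝒜, A ∪ B ∈ 𝒜)

include hEmp hUniv hcompl hinter hunion in
lemma muOf_nonneg (Bel : Set Ω → ℝ) (hBel : IsBelief (↑𝒜) Bel)
    {B : Set Ω} (hB : B ∈ 𝒜.erase ∅) : 0 ≤ muOf 𝒜 Bel B := by
  obtain ⟨hIcc, hBel0, hBel1, hCM⟩ := hBel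
  obtain ⟨hBne, hB𝒜⟩ := Finset.mem_erase.1 hB
  set T := TOf 𝒜 B with hT
  have hcov : B = ⋃₀ ↑T := cover 𝒜 hUniv hcompl hinter hB𝒜
  have hT𝒜 : (T : Finset (Set Ω)) ⊆ 𝒜 := (TOf_subset_Atoms 𝒜 B).trans (Atoms_subset 𝒜)
  have hTne : T.Nonempty := by
    rw [Finset.nonempty_iff_ne_empty]
    intro h
    apply hBne
    rw [hcov, h]; simp
  set n := T.card with hn
  have hn1 : 1 ≤ n := Finset.card_pos.2 hTne
  rcases eq_or_lt_of_le hn1 with hn1' | hn2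
  · -- n = 1 : T = {C}, muOf B = Bel C ≥ 0
    obtain ⟨C, hC⟩ := Finset.card_eq_one.1 hn1'.symm
    have hC𝒜 : C ∈ 𝒜 := hT𝒜 (by rw [hC]; exact mem_singleton_self C)
    have : muOf 𝒜 Bel B = Bel C := by
      rw [muOf, ← hT, hC]
      have hps : ({C} : Finset (Set Ω)).powerset = {∅, {C}} := rfl
      rw [hps, Finset.sum_insert (by intro h; rw [Finset.mem_singleton] at h; exact (Finset.singleton_ne_empty C) h.symm), Finset.sum_singleton]
      simp [hBel0]
    rw [this]
    exact (hIcc C (by exact_mod_cast hC𝒜)).1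
  · -- n ≥ 2 : use complete monotonicity
    have hn2' : 2 ≤ n := hn2
    set e : Fin n → Set Ω := fun i => ((T.equivFin.symm i : {x // x ∈ T}) : Set Ω) with he
    have he_mem : ∀ i, e i ∈ T := fun i => (T.equivFin.symm i).2
    have he_inj : Function.Injective e :=
      Subtype.coe_injective.comp (Equiv.injective _)
    have he_surj : ∀ C ∈ T, ∃ i, e i = C := by
      intro C hC
      exact ⟨T.equivFin ⟨C, hC⟩, by simp [he]⟩
    set A' : Fin n → Set Ω := fun i => ⋃₀ ↑(T.erase (e i)) with hA'
    have hA'mem : ∀ i, A' i ∈ 𝒜 := fun i =>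
      sUnion_mem 𝒜 hEmp hunion _ ((erase_subset _ _).trans hT𝒜)
    have hA'sub : ∀ i, A' i ⊆ B := by
      intro i
      rw [hcov]
      exact Set.sUnion_subset_sUnion (by exact_mod_cast erase_subset _ _)
    have hUnionEq : ⋃ i, A' i = B := by
      apply Set.Subset.antisymm
      · exact Set.iUnion_subset hA'sub
      · intro ω hω
        rcases Set.mem_sUnion.1 (hcov ▸ hω) with ⟨C, hC, hωC⟩
        rw [Finset.mem_coe] at hC
        obtain ⟨i₀, hi₀⟩ := he_surj C hC
        have : Nontrivial (Fin n) := by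
          apply Fin.nontrivial_iff_two_le.2 hn2'
        obtain ⟨j, hj⟩ := exists_ne i₀
        refine Set.mem_iUnion.2 ⟨j, ?_⟩
        refine Set.mem_sUnion.2 ⟨C, ?_, hωC⟩
        rw [Finset.mem_coe, Finset.mem_erase]
        exact ⟨fun h => hj (he_inj (hi₀.trans h)).symm, hC⟩
    have hInterEq : ∀ I : Finset (Fin n), I.Nonempty →
        (⋂ i ∈ I, A' i) = ⋃₀ ↑(T \ I.image e) := by
      intro I hI
      apply Set.Subset.antisymm
      · intro x hx
        obtain ⟨i₀, hi₀⟩ := hI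
        have hxB : x ∈ B := hA'sub i₀ (Set.mem_iInter₂.1 hx i₀ hi₀)
        have hat : atOf 𝒜 x ∈ T := by
          rw [hT, mem_TOf]
          exact ⟨atOf_mem_Atoms 𝒜 hUniv hcompl hinter x, atOf_subset hB𝒜 hxB⟩
        have hnotim : atOf 𝒜 x ∉ I.image e := by
          rw [Finset.mem_image]
          rintro ⟨i, hiI, hie⟩
          have hxAi : x ∈ A' i := Set.mem_iInter₂.1 hx i hiI
          rcases Set.mem_sUnion.1 hxAi with ⟨D, hD, hxD⟩
          rw [Finset.mem_coe, Finset.mem_erase] at hD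
          have hDatom : D ∈ Atoms 𝒜 := TOf_subset_Atoms 𝒜 B hD.2
          have haatom : atOf 𝒜 x ∈ Atoms 𝒜 := atOf_mem_Atoms 𝒜 hUniv hcompl hinter x
          by_cases hDa : D = atOf 𝒜 x
          · exact hD.1 (hDa.trans hie.symm)
          · have := atoms_disjoint hinter hDatom haatom hDa
            exact absurd this (Set.nonempty_iff_ne_empty.1 ⟨x, hxD, mem_atOf 𝒜 x⟩)
        exact Set.mem_sUnion.2 ⟨atOf 𝒜 x, Finset.mem_coe.2 (Finset.mem_sdiff.2 ⟨hat, hnotim⟩),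
          mem_atOf 𝒜 x⟩
      · intro x hx
        rcases Set.mem_sUnion.1 hx with ⟨C, hC, hxC⟩
        rw [Finset.mem_coe, Finset.mem_sdiff] at hC
        apply Set.mem_iInter₂.2
        intro i hiI
        refine Set.mem_sUnion.2 ⟨C, ?_, hxC⟩
        rw [Finset.mem_coe, Finset.mem_erase]
        refine ⟨fun h => hC.2 (Finset.mem_image.2 ⟨i, hiI, h.symm⟩), hC.1⟩
    have hCMapp := hCM n hn2' A' (fun i => by exact_mod_cast hA'mem i)
    rw [hUnionEq] at hCMapp
    have hrw : ∑ I ∈ Finset.univ.powerset.filter (fun I : Finset (Fin n) => I.Nonempty),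
        (-1 : ℝ) ^ (I.card + 1) * Bel (⋂ i ∈ I, A' i)
        = ∑ S ∈ T.powerset.erase T, (-1 : ℝ) ^ ((n - S.card) + 1) * Bel (⋃₀ ↑S) := by
      refine Finset.sum_nbij' (fun I => T \ I.image e)
        (fun S => Finset.univ.filter (fun i => e i ∉ S)) ?_ ?_ ?_ ?_ ?_
      · intro I hI
        rw [mem_filter] at hI
        rw [Finset.mem_erase, mem_powerset]
        constructor
        · intro h
          obtain ⟨i₀, hi₀⟩ := hI.2
          have hmem2 : e i₀ ∉ T \ I.image e := by
            rw [Finset.mem_sdiff]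
            exact fun hc => hc.2 (Finset.mem_image.2 ⟨i₀, hi₀, rfl⟩)
          rw [h] at hmem2
          exact hmem2 (he_mem i₀)
        · exact sdiff_subset
      · intro S hS
        rw [Finset.mem_erase, mem_powerset] at hS
        rw [mem_filter]
        refine ⟨mem_powerset.2 (subset_univ _), ?_⟩
        obtain ⟨x, hxT, hxS⟩ := Finset.exists_of_ssubset ⟨hS.2, fun h => hS.1 (hS.2.antisymm h)⟩
        obtain ⟨i, hi⟩ := he_surj x hxT
        exact ⟨i, mem_filter.2 ⟨mem_univ i, by rw [hi]; exact hxS⟩⟩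
      · intro I hI
        ext i
        rw [mem_filter, Finset.mem_sdiff]
        simp only [mem_univ, true_and]
        constructor
        · intro h
          by_contra hiI
          exact h ⟨he_mem i, fun him => by
            rcases Finset.mem_image.1 him with ⟨i', hi'I, hi'e⟩
            exact hiI (he_inj hi'e ▸ hi'I)⟩
        · intro hiI h
          exact h.2 (Finset.mem_image.2 ⟨i, hiI, rfl⟩)
      · intro S hS
        rw [Finset.mem_erase, mem_powerset] at hS
        ext x
        rw [Finset.mem_sdiff]
        constructor
        · rintro ⟨hxT, hxim⟩
          by_contra hxS
          obtain ⟨i, hi⟩ := he_surj x hxT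
          exact hxim (Finset.mem_image.2 ⟨i, mem_filter.2 ⟨mem_univ i, by rw [hi]; exact hxS⟩, hi⟩)
        · intro hxS
          refine ⟨hS.2 hxS, ?_⟩
          intro him
          rcases Finset.mem_image.1 him with ⟨i, hif, hie⟩
          exact (mem_filter.1 hif).2 (hie ▸ hxS)
      · intro I hI
        rw [mem_filter] at hI
        have hcard : (T \ I.image e).card = n - I.card := by
          rw [Finset.card_sdiff_of_subset]
          · rw [Finset.card_image_of_injective _ he_inj]
          · intro x hx
            rcases Finset.mem_image.1 hx with ⟨i, _, hie⟩
            exact hie ▸ he_mem i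
        have hIle : I.card ≤ n := by
          calc I.card ≤ (Finset.univ : Finset (Fin n)).card := card_le_card (subset_univ _)
            _ = n := by simp
        rw [hInterEq I hI.2, hcard, Nat.sub_sub_self hIle]
    rw [hrw] at hCMapp
    have hsplit : muOf 𝒜 Bel B
        = (∑ S ∈ T.powerset.erase T, (-1 : ℝ) ^ (n - S.card) * Bel (⋃₀ ↑S)) + Bel B := by
      rw [muOf, ← hT, ← hn]
      rw [← Finset.sum_erase_add T.powerset _ (mem_powerset.2 (Finset.Subset.refl T))]
      congr 1
      rw [Nat.sub_self, pow_zero, one_mul, ← hcov]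
    have hneg : ∑ S ∈ T.powerset.erase T, (-1 : ℝ) ^ ((n - S.card) + 1) * Bel (⋃₀ ↑S)
        = -∑ S ∈ T.powerset.erase T, (-1 : ℝ) ^ (n - S.card) * Bel (⋃₀ ↑S) := by
      rw [← Finset.sum_neg_distrib]
      apply Finset.sum_congr rfl
      intro S _
      rw [pow_succ]
      ring
    rw [hneg] at hCMapp
    rw [hsplit]
    linarith

end Main

lemma repr_unique (𝒜 : Finset (Set Ω)) (Bel μ₁ μ₂ : Set Ω → ℝ)
    (h₁ : ∀ A ∈ 𝒜, Bel A = ∑ B ∈ 𝒜.erase ∅, (if B ⊆ A then (1:ℝ) else 0) * μ₁ B)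
    (h₂ : ∀ A ∈ 𝒜, Bel A = ∑ B ∈ 𝒜.erase ∅, (if B ⊆ A then (1:ℝ) else 0) * μ₂ B) :
    ∀ B ∈ 𝒜.erase ∅, μ₁ B = μ₂ B := by
  suffices H : ∀ n : ℕ, ∀ B ∈ 𝒜.erase ∅,
      ((𝒜.erase ∅).filter (fun C => C ⊆ B)).card = n → μ₁ B = μ₂ B by
    exact fun B hB => H _ B hB rfl
  intro n
  induction n using Nat.strong_induction_on with
  | _ n ih =>
  intro B hB hcard
  have hB𝒜 : B ∈ 𝒜 := Finset.mem_of_mem_erase hB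
  have key : ∀ μ : Set Ω → ℝ, ∑ C ∈ 𝒜.erase ∅, (if C ⊆ B then (1:ℝ) else 0) * μ C
      = μ B + ∑ C ∈ ((𝒜.erase ∅).filter (fun C => C ⊆ B)).erase B, μ C := by
    intro μ
    have hstep : ∑ C ∈ 𝒜.erase ∅, (if C ⊆ B then (1:ℝ) else 0) * μ C
        = ∑ C ∈ (𝒜.erase ∅).filter (fun C => C ⊆ B), μ C := by
      rw [Finset.sum_filter]
      apply Finset.sum_congr rfl
      intro C _
      split_ifs <;> simp
    rw [hstep]
    apply (Finset.add_sum_erase _ μ _).symm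
    exact Finset.mem_filter.2 ⟨hB, Set.Subset.refl B⟩
  have e1 := h₁ B hB𝒜
  have e2 := h₂ B hB𝒜
  rw [key μ₁] at e1
  rw [key μ₂] at e2
  have hsame : ∑ C ∈ ((𝒜.erase ∅).filter (fun C => C ⊆ B)).erase B, μ₁ C
      = ∑ C ∈ ((𝒜.erase ∅).filter (fun C => C ⊆ B)).erase B, μ₂ C := by
    apply Finset.sum_congr rfl
    intro C hC
    rw [Finset.mem_erase, Finset.mem_filter] at hC
    obtain ⟨hCneB, hCU, hCsubB⟩ := hC
    have hlt : ((𝒜.erase ∅).filter (fun D => D ⊆ C)).card < n := by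
      rw [← hcard]
      apply Finset.card_lt_card
      rw [Finset.ssubset_def]
      constructor
      · intro D hD
        rw [Finset.mem_filter] at hD ⊢
        exact ⟨hD.1, hD.2.trans hCsubB⟩
      · intro hcontra
        have hBmem : B ∈ (𝒜.erase ∅).filter (fun D => D ⊆ C) :=
          hcontra (Finset.mem_filter.2 ⟨hB, Set.Subset.refl B⟩)
        exact hCneB (Set.Subset.antisymm hCsubB (Finset.mem_filter.1 hBmem).2)
    exact ih _ hlt C hCU rfl
  linarith

lemma converse_isBelief (𝒜 : Finset (Set Ω)) (μ : Set Ω → ℝ)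
    (hμ : IsProbDistOn (𝒜.erase ∅) μ) :
    IsBelief (↑𝒜) (fun A => ∑ B ∈ 𝒜.erase ∅, (if B ⊆ A then (1:ℝ) else 0) * μ B) := by
  obtain ⟨hnn, hsum⟩ := hμ
  have hterm_nonneg : ∀ (A : Set Ω), ∀ B ∈ 𝒜.erase ∅,
      0 ≤ (if B ⊆ A then (1:ℝ) else 0) * μ B := by
    intro A B hB
    split_ifs with h
    · simpa using hnn B hB
    · simp
  refine ⟨?_, ?_, ?_, ?_⟩
  · intro A _
    constructor
    · exact Finset.sum_nonneg (hterm_nonneg A)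
    · calc ∑ B ∈ 𝒜.erase ∅, (if B ⊆ A then (1:ℝ) else 0) * μ B
          ≤ ∑ B ∈ 𝒜.erase ∅, μ B := by
            apply Finset.sum_le_sum
            intro B hB
            split_ifs
            · simp
            · simpa using hnn B hB
        _ = 1 := hsum
  · simp only []
    apply Finset.sum_eq_zero
    intro B hB
    rw [if_neg, zero_mul]
    intro hsub
    exact (Finset.mem_erase.1 hB).1 (Set.subset_empty_iff.1 hsub)
  · simp only []
    have h1 : ∀ B ∈ 𝒜.erase ∅, (if B ⊆ Set.univ then (1:ℝ) else 0) * μ B = μ B := by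
      intro B _
      rw [if_pos (Set.subset_univ _), one_mul]
    rw [Finset.sum_congr rfl h1, hsum]
  · intro k hk A hA
    simp only []
    have inner : ∀ B : Set Ω,
        (∑ I ∈ Finset.univ.powerset.filter (fun I : Finset (Fin k) => I.Nonempty),
          (-1:ℝ)^(I.card+1) * (if B ⊆ ⋂ i ∈ I, A i then (1:ℝ) else 0))
        = if ∃ i, B ⊆ A i then (1:ℝ) else 0 := by
      intro B
      set J : Finset (Fin k) := Finset.univ.filter (fun i => B ⊆ A i) with hJ
      have hiff : ∀ I : Finset (Fin k), (B ⊆ ⋂ i ∈ I, A i) ↔ I ⊆ J := by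
        intro I
        rw [Set.subset_iInter₂_iff]
        constructor
        · intro h i hi
          rw [hJ, Finset.mem_filter]
          exact ⟨Finset.mem_univ i, h i hi⟩
        · intro h i hi
          exact (Finset.mem_filter.1 (h hi)).2
      have step1 : ∑ I ∈ Finset.univ.powerset.filter (fun I : Finset (Fin k) => I.Nonempty),
          (-1:ℝ)^(I.card+1) * (if B ⊆ ⋂ i ∈ I, A i then (1:ℝ) else 0)
          = ∑ I ∈ (Finset.univ.powerset.filter
              (fun I : Finset (Fin k) => I.Nonempty)).filter (fun I => I ⊆ J),
            (-1:ℝ)^(I.card+1) := by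
        have hterm : ∀ I ∈ Finset.univ.powerset.filter
            (fun I : Finset (Fin k) => I.Nonempty),
            (-1:ℝ)^(I.card+1) * (if B ⊆ ⋂ i ∈ I, A i then (1:ℝ) else 0)
            = if I ⊆ J then (-1:ℝ)^(I.card+1) else 0 := by
          intro I _
          rw [if_congr (hiff I) rfl rfl]
          split_ifs
          · rw [mul_one]
          · rw [mul_zero]
        rw [Finset.sum_congr rfl hterm, ← Finset.sum_filter]
      have step2 : (Finset.univ.powerset.filter
          (fun I : Finset (Fin k) => I.Nonempty)).filter (fun I => I ⊆ J)
          = J.powerset.erase ∅ := by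
        ext I
        simp only [Finset.mem_filter, Finset.mem_powerset, Finset.mem_erase,
          Finset.subset_univ, true_and, Finset.nonempty_iff_ne_empty]
        try tauto
      have step3 : ∑ I ∈ J.powerset.erase ∅, (-1:ℝ)^(I.card+1)
          = (∑ I ∈ J.powerset, (-1:ℝ)^(I.card+1)) - (-1:ℝ)^((∅ : Finset (Fin k)).card+1) := by
        rw [← Finset.sum_erase_add J.powerset _ (Finset.mem_powerset.2 (Finset.empty_subset _))]
        ring
      have step4 : ∑ I ∈ J.powerset, (-1:ℝ)^(I.card+1)
          = -∑ I ∈ J.powerset, (-1:ℝ)^I.card := by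
        rw [← Finset.sum_neg_distrib]
        apply Finset.sum_congr rfl
        intro I _
        rw [pow_succ]
        ring
      have h := sum_powerset_neg_one_real J
      rw [step1, step2, step3, step4, h]
      have hJne : (∃ i, B ⊆ A i) ↔ J ≠ ∅ := by
        rw [← Finset.nonempty_iff_ne_empty, hJ]
        constructor
        · rintro ⟨i, hi⟩
          exact ⟨i, Finset.mem_filter.2 ⟨Finset.mem_univ i, hi⟩⟩
        · rintro ⟨i, hi⟩
          exact ⟨i, (Finset.mem_filter.1 hi).2⟩
      by_cases hJ0 : J = ∅
      · rw [if_pos hJ0, if_neg (fun hh => (hJne.1 hh) hJ0)]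
        simp
      · rw [if_neg hJ0, if_pos (hJne.2 hJ0)]
        simp
    calc ∑ I ∈ Finset.univ.powerset.filter (fun I : Finset (Fin k) => I.Nonempty),
        (-1:ℝ)^(I.card+1) * ∑ B ∈ 𝒜.erase ∅, (if B ⊆ ⋂ i ∈ I, A i then (1:ℝ) else 0) * μ B
        = ∑ B ∈ 𝒜.erase ∅,
            (∑ I ∈ Finset.univ.powerset.filter (fun I : Finset (Fin k) => I.Nonempty),
              (-1:ℝ)^(I.card+1) * (if B ⊆ ⋂ i ∈ I, A i then (1:ℝ) else 0)) * μ B := by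
          simp_rw [Finset.mul_sum]
          rw [Finset.sum_comm]
          apply Finset.sum_congr rfl
          intro B _
          rw [Finset.sum_mul]
          apply Finset.sum_congr rfl
          intro I _
          ring
      _ = ∑ B ∈ 𝒜.erase ∅, (if ∃ i, B ⊆ A i then (1:ℝ) else 0) * μ B := by
          apply Finset.sum_congr rfl
          intro B _
          rw [inner B]
      _ ≤ ∑ B ∈ 𝒜.erase ∅, (if B ⊆ ⋃ i, A i then (1:ℝ) else 0) * μ B := by
          apply Finset.sum_le_sum
          intro B hB
          by_cases h : ∃ i, B ⊆ A i
          · rcases h with ⟨i, hi⟩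
            rw [if_pos ⟨i, hi⟩, if_pos (hi.trans (Set.subset_iUnion A i))]
          · rw [if_neg h, zero_mul]
            exact hterm_nonneg _ B hB

end BeliefProofAux

theorem stmt_6 {Ω : Type*} [Nonempty Ω] (𝒜 : Finset (Set Ω))
    (hEmp : ∅ ∈ 𝒜) (hUniv : Set.univ ∈ 𝒜)
    (hcompl : ∀ A ∈ 𝒜, Aᶜ ∈ 𝒜)
    (hinter : ∀ A ∈ 𝒜, ∀ B ∈ 𝒜, A ∩ B ∈ 𝒜)
    (hunion : ∀ A ∈ 𝒜, ∀ B ∈ 𝒜, A ∪ B ∈ 𝒜) :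
    -- direct implication, with uniqueness of the representing distribution
    (∀ Bel : Set Ω → ℝ, IsBelief (↑𝒜) Bel →
      ∃ μ : Set Ω → ℝ, IsProbDistOn (𝒜.erase ∅) μ ∧
        (∀ A ∈ 𝒜, Bel A =
          ∑ B ∈ 𝒜.erase ∅, (if B ⊆ A then (1 : ℝ) else 0) * μ B) ∧
        ∀ μ' : Set Ω → ℝ, IsProbDistOn (𝒜.erase ∅) μ' →
          (∀ A ∈ 𝒜, Bel A =
            ∑ B ∈ 𝒜.erase ∅, (if B ⊆ A then (1 : ℝ) else 0) * μ' B) →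
          ∀ B ∈ 𝒜.erase ∅, μ' B = μ B) ∧
    -- converse: every convex combination of unanimity games is a belief function
    (∀ μ : Set Ω → ℝ, IsProbDistOn (𝒜.erase ∅) μ →
      IsBelief (↑𝒜)
        (fun A => ∑ B ∈ 𝒜.erase ∅, (if B ⊆ A then (1 : ℝ) else 0) * μ B)) := by
  constructor
  · intro Bel hBel
    have hBel0 : Bel ∅ = 0 := hBel.2.1
    have hBel1 : Bel Set.univ = 1 := hBel.2.2.1
    have hrepr : ∀ A ∈ 𝒜, Bel A =
        ∑ B ∈ 𝒜.erase ∅, (if B ⊆ A then (1 : ℝ) else 0) * BeliefProofAux.muOf 𝒜 Bel B :=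
      fun A hA =>
        (BeliefProofAux.representation 𝒜 hEmp hUniv hcompl hinter hunion Bel hBel0 hA).symm
    refine ⟨BeliefProofAux.muOf 𝒜 Bel,
      ⟨fun B hB => BeliefProofAux.muOf_nonneg 𝒜 hEmp hUniv hcompl hinter hunion Bel hBel hB,
        ?_⟩, hrepr, ?_⟩
    · have hone : ∀ B ∈ 𝒜.erase ∅,
          (if B ⊆ Set.univ then (1:ℝ) else 0) * BeliefProofAux.muOf 𝒜 Bel B
            = BeliefProofAux.muOf 𝒜 Bel B := by
        intro B _
        rw [if_pos (Set.subset_univ _), one_mul]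
      calc ∑ B ∈ 𝒜.erase ∅, BeliefProofAux.muOf 𝒜 Bel B
          = ∑ B ∈ 𝒜.erase ∅,
            (if B ⊆ Set.univ then (1:ℝ) else 0) * BeliefProofAux.muOf 𝒜 Bel B :=
            (Finset.sum_congr rfl hone).symm
        _ = Bel Set.univ := (hrepr Set.univ hUniv).symm
        _ = 1 := hBel1
    · intro μ' hμ' hrepr' B hB
      exact BeliefProofAux.repr_unique 𝒜 Bel μ' (BeliefProofAux.muOf 𝒜 Bel) hrepr' hrepr B hB
  · intro μ hμ
    exact BeliefProofAux.converse_isBelief 𝒜 μ hμ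
end

section
/- A belief assessment on a finite family of events is coherent-3 if and only if it is coherent-1: for a finite family E = {E₁,…,E_n} of subsets of Ω, with A_E the algebra generated by E and U_E = A_E∖{∅}, the linear system Σ_{B∈U_E} (min_{ω∈B} 1_{E_i}(ω)) x_B = Bel(E_i) (i=1,…,n), Σ_{B∈U_E} x_B = 1, x_B ≥ 0, is solvable if and only if there exists a belief function Bel' : A_E → [0,1] with Bel'(E_i) = Bel(E_i) for all i. -/
open scoped Classical

/-- `𝒜` (a set of subsets of `Ω`) is an algebra of sets. -/
def IsSetAlgebra {Ω : Type*} (𝒜 : Set (Set Ω)) : Prop :=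
  ∅ ∈ 𝒜 ∧ Set.univ ∈ 𝒜 ∧ (∀ A ∈ 𝒜, Aᶜ ∈ 𝒜) ∧
    (∀ A ∈ 𝒜, ∀ B ∈ 𝒜, A ∩ B ∈ 𝒜) ∧ (∀ A ∈ 𝒜, ∀ B ∈ 𝒜, A ∪ B ∈ 𝒜)

/-- The finite family `𝒜` is the algebra generated by `𝒢`. -/
def IsGenAlgebraOf {Ω : Type*} (𝒜 : Finset (Set Ω)) (𝒢 : Set (Set Ω)) : Prop :=
  IsSetAlgebra (↑𝒜 : Set (Set Ω)) ∧ 𝒢 ⊆ ↑𝒜 ∧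
    ∀ ℬ : Set (Set Ω), IsSetAlgebra ℬ → 𝒢 ⊆ ℬ → ↑𝒜 ⊆ ℬ

lemma sum_pow_neg_one_real {α : Type*} (x : Finset α) :
    (∑ m ∈ x.powerset, (-1 : ℝ) ^ m.card) = if x = ∅ then 1 else 0 := by
  have h := Finset.sum_powerset_neg_one_pow_card (x := x)
  calc (∑ m ∈ x.powerset, (-1 : ℝ) ^ m.card)
      = ((∑ m ∈ x.powerset, (-1 : ℤ) ^ m.card : ℤ) : ℝ) := by push_cast; rfl
    _ = _ := by rw [h]; split <;> norm_num

lemma mobius_double {α : Type*} (T : Finset α) (g : Finset α → ℝ) :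
    ∑ S ∈ T.powerset, ∑ J ∈ S.powerset, (-1:ℝ)^J.card * g (S \ J) = g T := by
  have step1 : ∀ S : Finset α, ∑ J ∈ S.powerset, (-1:ℝ)^J.card * g (S \ J)
      = ∑ R ∈ S.powerset, (-1:ℝ)^((S \ R).card) * g R := by
    intro S
    refine Finset.sum_nbij' (fun J => S \ J) (fun R => S \ R) ?_ ?_ ?_ ?_ ?_
    · intro J hJ; exact Finset.mem_powerset.2 (Finset.sdiff_subset)
    · intro R hR; exact Finset.mem_powerset.2 (Finset.sdiff_subset)
    · intro J hJ; exact Finset.sdiff_sdiff_eq_self (Finset.mem_powerset.1 hJ)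
    · intro R hR; exact Finset.sdiff_sdiff_eq_self (Finset.mem_powerset.1 hR)
    · intro J hJ
      rw [Finset.sdiff_sdiff_eq_self (Finset.mem_powerset.1 hJ)]
  rw [Finset.sum_congr rfl (fun S _ => step1 S)]
  have step2 : ∑ S ∈ T.powerset, ∑ R ∈ S.powerset, (-1:ℝ)^((S \ R).card) * g R
      = ∑ R ∈ T.powerset, ∑ S ∈ T.powerset.filter (fun S => R ⊆ S), (-1:ℝ)^((S \ R).card) * g R := by
    refine Finset.sum_comm' ?_
    intro S R
    simp only [Finset.mem_powerset, Finset.mem_filter]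
    constructor
    · rintro ⟨h1, h2⟩; exact ⟨⟨h1, h2⟩, h2.trans h1⟩
    · rintro ⟨⟨h1, h2⟩, _⟩; exact ⟨h1, h2⟩
  rw [step2]
  have step3 : ∀ R ∈ T.powerset, ∑ S ∈ T.powerset.filter (fun S => R ⊆ S), (-1:ℝ)^((S \ R).card) * g R
      = (if T \ R = ∅ then 1 else 0) * g R := by
    intro R hR
    rw [← sum_pow_neg_one_real (T \ R), Finset.sum_mul]
    refine Finset.sum_nbij' (fun S => S \ R) (fun Q => R ∪ Q) ?_ ?_ ?_ ?_ ?_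
    · intro S hS
      simp only [Finset.mem_filter, Finset.mem_powerset] at hS
      exact Finset.mem_powerset.2 (Finset.sdiff_subset_sdiff hS.1 le_rfl)
    · intro Q hQ
      simp only [Finset.mem_powerset] at hQ
      simp only [Finset.mem_filter, Finset.mem_powerset]
      exact ⟨Finset.union_subset (Finset.mem_powerset.1 hR) (hQ.trans Finset.sdiff_subset),
        Finset.subset_union_left⟩
    · intro S hS
      simp only [Finset.mem_filter] at hS
      exact Finset.union_sdiff_of_subset hS.2
    · intro Q hQ
      simp only [Finset.mem_powerset] at hQ
      exact Finset.union_sdiff_cancel_left (Finset.disjoint_of_subset_right hQ Finset.sdiff_disjoint.symm)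
    · intro S hS; rfl
  rw [Finset.sum_congr rfl step3]
  rw [Finset.sum_eq_single_of_mem T (Finset.mem_powerset_self T)]
  · simp
  · intro R hR hne
    have : T \ R ≠ ∅ := by
      intro h
      exact hne (le_antisymm (Finset.mem_powerset.1 hR) (Finset.sdiff_eq_empty_iff_subset.1 h))
    rw [if_neg this, zero_mul]

namespace BelAux
variable {Ω : Type*}

lemma sInter_mem {𝒜 : Finset (Set Ω)} (hA : IsSetAlgebra (↑𝒜 : Set (Set Ω)))
    {S : Finset (Set Ω)} (hS : S ⊆ 𝒜) : ⋂₀ ↑S ∈ 𝒜 := by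
  classical
  induction S using Finset.induction_on with
  | empty => simpa using hA.2.1
  | @insert a s hnotmem ih =>
    rw [Finset.coe_insert, Set.sInter_insert]
    have ha : a ∈ 𝒜 := hS (Finset.mem_insert_self a s)
    have hs : ⋂₀ ↑s ∈ 𝒜 := ih (fun x hx => hS (Finset.mem_insert_of_mem hx))
    exact hA.2.2.2.1 a ha _ hs

lemma sUnion_mem {𝒜 : Finset (Set Ω)} (hA : IsSetAlgebra (↑𝒜 : Set (Set Ω)))
    {S : Finset (Set Ω)} (hS : S ⊆ 𝒜) : ⋃₀ ↑S ∈ 𝒜 := by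
  classical
  induction S using Finset.induction_on with
  | empty => simpa using hA.1
  | @insert a s hnotmem ih =>
    rw [Finset.coe_insert, Set.sUnion_insert]
    have ha : a ∈ 𝒜 := hS (Finset.mem_insert_self a s)
    have hs : ⋃₀ ↑s ∈ 𝒜 := ih (fun x hx => hS (Finset.mem_insert_of_mem hx))
    exact hA.2.2.2.2 a ha _ hs

noncomputable def atomOf (𝒜 : Finset (Set Ω)) (ω : Ω) : Set Ω :=
  ⋂₀ ↑(𝒜.filter (fun A => ω ∈ A))

lemma mem_atomOf (𝒜 : Finset (Set Ω)) (ω : Ω) : ω ∈ atomOf 𝒜 ω := by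
  intro A hA
  rw [Finset.mem_coe, Finset.mem_filter] at hA
  exact hA.2

lemma atomOf_mem {𝒜 : Finset (Set Ω)} (hA : IsSetAlgebra (↑𝒜 : Set (Set Ω))) (ω : Ω) :
    atomOf 𝒜 ω ∈ 𝒜 :=
  sInter_mem hA (Finset.filter_subset _ _)

lemma atomOf_subset {𝒜 : Finset (Set Ω)} {A : Set Ω} (hmem : A ∈ 𝒜) {ω : Ω} (hω : ω ∈ A) :
    atomOf 𝒜 ω ⊆ A :=
  Set.sInter_subset_of_mem (by rw [Finset.mem_coe, Finset.mem_filter]; exact ⟨hmem, hω⟩)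

lemma atomOf_eq {𝒜 : Finset (Set Ω)} (hA : IsSetAlgebra (↑𝒜 : Set (Set Ω))) {ω ω' : Ω}
    (h : ω' ∈ atomOf 𝒜 ω) : atomOf 𝒜 ω' = atomOf 𝒜 ω := by
  have h1 : atomOf 𝒜 ω' ⊆ atomOf 𝒜 ω := by
    intro y hy
    intro A hAmem
    rw [Finset.mem_coe, Finset.mem_filter] at hAmem
    have : ω' ∈ A := atomOf_subset hAmem.1 hAmem.2 h
    exact hy A (by rw [Finset.mem_coe, Finset.mem_filter]; exact ⟨hAmem.1, this⟩)
  have h2 : atomOf 𝒜 ω ⊆ atomOf 𝒜 ω' := by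
    intro y hy
    intro A hAmem
    rw [Finset.mem_coe, Finset.mem_filter] at hAmem
    have hωA : ω ∈ A := by
      by_contra hn
      have hc : Aᶜ ∈ 𝒜 := hA.2.2.1 A hAmem.1
      have : atomOf 𝒜 ω ⊆ Aᶜ := atomOf_subset hc hn
      exact (this h) hAmem.2
    exact hy A (by rw [Finset.mem_coe, Finset.mem_filter]; exact ⟨hAmem.1, hωA⟩)
  exact le_antisymm h1 h2

noncomputable def atomsOf (𝒜 : Finset (Set Ω)) : Finset (Set Ω) :=
  𝒜.filter (fun B => ∃ ω, atomOf 𝒜 ω = B)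

lemma atomsOf_subset (𝒜 : Finset (Set Ω)) : atomsOf 𝒜 ⊆ 𝒜 := Finset.filter_subset _ _

lemma atoms_nonempty {𝒜 : Finset (Set Ω)} {a : Set Ω} (ha : a ∈ atomsOf 𝒜) : a.Nonempty := by
  rw [atomsOf, Finset.mem_filter] at ha
  obtain ⟨ω, rfl⟩ := ha.2
  exact ⟨ω, mem_atomOf 𝒜 ω⟩

/-- an atom containing ω equals atomOf ω -/
lemma atom_eq_atomOf {𝒜 : Finset (Set Ω)} (hA : IsSetAlgebra (↑𝒜 : Set (Set Ω)))
    {a : Set Ω} (ha : a ∈ atomsOf 𝒜) {ω : Ω} (hω : ω ∈ a) : a = atomOf 𝒜 ω := by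
  rw [atomsOf, Finset.mem_filter] at ha
  obtain ⟨ω', rfl⟩ := ha.2
  exact (atomOf_eq hA hω).symm

noncomputable def TOf (𝒜 : Finset (Set Ω)) (A : Set Ω) : Finset (Set Ω) :=
  (atomsOf 𝒜).filter (fun a => a ⊆ A)

lemma TOf_subset_atoms (𝒜 : Finset (Set Ω)) (A : Set Ω) : TOf 𝒜 A ⊆ atomsOf 𝒜 :=
  Finset.filter_subset _ _

lemma sUnion_TOf {𝒜 : Finset (Set Ω)} (hA : IsSetAlgebra (↑𝒜 : Set (Set Ω)))
    {A : Set Ω} (hmem : A ∈ 𝒜) : ⋃₀ ↑(TOf 𝒜 A) = A := by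
  apply le_antisymm
  · refine Set.sUnion_subset ?_
    intro a ha
    rw [Finset.mem_coe, TOf, Finset.mem_filter] at ha
    exact ha.2
  · intro ω hω
    refine Set.mem_sUnion.2 ⟨atomOf 𝒜 ω, ?_, mem_atomOf 𝒜 ω⟩
    rw [Finset.mem_coe, TOf, Finset.mem_filter]
    refine ⟨?_, atomOf_subset hmem hω⟩
    rw [atomsOf, Finset.mem_filter]
    exact ⟨atomOf_mem hA ω, ⟨ω, rfl⟩⟩

lemma TOf_sUnion {𝒜 : Finset (Set Ω)} (hA : IsSetAlgebra (↑𝒜 : Set (Set Ω)))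
    {S : Finset (Set Ω)} (hS : S ⊆ atomsOf 𝒜) : TOf 𝒜 (⋃₀ ↑S) = S := by
  apply Finset.Subset.antisymm
  · intro a ha
    rw [TOf, Finset.mem_filter] at ha
    obtain ⟨haat, hsub⟩ := ha
    obtain ⟨ω, hω⟩ := atoms_nonempty haat
    obtain ⟨b, hb, hωb⟩ := Set.mem_sUnion.1 (hsub hω)
    rw [Finset.mem_coe] at hb
    have h1 : a = atomOf 𝒜 ω := atom_eq_atomOf hA haat hω
    have h2 : b = atomOf 𝒜 ω := atom_eq_atomOf hA (hS hb) hωb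
    rw [h1, ← h2]; exact hb
  · intro b hb
    rw [TOf, Finset.mem_filter]
    exact ⟨hS hb, Set.subset_sUnion_of_mem (Finset.mem_coe.2 hb)⟩

lemma TOf_empty {𝒜 : Finset (Set Ω)} : TOf 𝒜 (∅ : Set Ω) = ∅ := by
  rw [Finset.eq_empty_iff_forall_notMem]
  intro a ha
  rw [TOf, Finset.mem_filter] at ha
  obtain ⟨ω, hω⟩ := atoms_nonempty ha.1
  exact ha.2 hω

lemma TOf_mono {𝒜 : Finset (Set Ω)} {A B : Set Ω} (h : A ⊆ B) : TOf 𝒜 A ⊆ TOf 𝒜 B := by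
  intro a ha
  rw [TOf, Finset.mem_filter] at ha ⊢
  exact ⟨ha.1, ha.2.trans h⟩

end BelAux
namespace BelAux
variable {Ω : Type*}

noncomputable def mOf (𝒜 : Finset (Set Ω)) (Bel' : Set Ω → ℝ) (B : Set Ω) : ℝ :=
  ∑ J ∈ (TOf 𝒜 B).powerset, (-1:ℝ)^J.card * Bel' (⋃₀ ↑((TOf 𝒜 B) \ J))

lemma mOf_empty {𝒜 : Finset (Set Ω)} {Bel' : Set Ω → ℝ} (h0 : Bel' ∅ = 0) :
    mOf 𝒜 Bel' (∅ : Set Ω) = 0 := by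
  rw [mOf, TOf_empty]
  simp [h0]

/-- Möbius inversion: the masses of nonempty elements below `A` sum to `Bel' A`. -/
lemma sum_mOf {𝒜 : Finset (Set Ω)} (hA : IsSetAlgebra (↑𝒜 : Set (Set Ω)))
    {Bel' : Set Ω → ℝ} (h0 : Bel' ∅ = 0) {A : Set Ω} (hmem : A ∈ 𝒜) :
    ∑ B ∈ (𝒜.erase ∅).filter (fun B => B ⊆ A), mOf 𝒜 Bel' B = Bel' A := by
  have hsub : (𝒜.erase ∅).filter (fun B => B ⊆ A) ⊆ 𝒜.filter (fun B => B ⊆ A) := by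
    intro B hB
    rw [Finset.mem_filter] at hB ⊢
    exact ⟨Finset.mem_of_mem_erase hB.1, hB.2⟩
  rw [Finset.sum_subset hsub ?side]
  case side =>
    intro B hB hnB
    rw [Finset.mem_filter] at hB hnB
    have : B = ∅ := by
      by_contra hne
      exact hnB ⟨Finset.mem_erase.2 ⟨hne, hB.1⟩, hB.2⟩
    rw [this]
    exact mOf_empty h0
  -- now reindex by powersets of atoms of A
  have hbij : ∑ B ∈ 𝒜.filter (fun B => B ⊆ A), mOf 𝒜 Bel' B
      = ∑ S ∈ (TOf 𝒜 A).powerset, mOf 𝒜 Bel' (⋃₀ ↑S) := by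
    refine Finset.sum_nbij' (fun B => TOf 𝒜 B) (fun S => ⋃₀ ↑S) ?_ ?_ ?_ ?_ ?_
    · intro B hB
      rw [Finset.mem_filter] at hB
      exact Finset.mem_powerset.2 (TOf_mono hB.2)
    · intro S hS
      rw [Finset.mem_powerset] at hS
      have hSat : S ⊆ atomsOf 𝒜 := hS.trans (TOf_subset_atoms 𝒜 A)
      rw [Finset.mem_filter]
      constructor
      · exact sUnion_mem hA (hSat.trans (atomsOf_subset 𝒜))
      · refine Set.sUnion_subset ?_
        intro a ha
        rw [Finset.mem_coe] at ha
        have := hS ha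
        rw [TOf, Finset.mem_filter] at this
        exact this.2
    · intro B hB
      rw [Finset.mem_filter] at hB
      exact sUnion_TOf hA hB.1
    · intro S hS
      rw [Finset.mem_powerset] at hS
      exact TOf_sUnion hA (hS.trans (TOf_subset_atoms 𝒜 A))
    · intro B hB
      rw [Finset.mem_filter] at hB
      show mOf 𝒜 Bel' B = mOf 𝒜 Bel' (⋃₀ ↑(TOf 𝒜 B))
      rw [sUnion_TOf hA hB.1]
  rw [hbij]
  have hm : ∀ S ∈ (TOf 𝒜 A).powerset, mOf 𝒜 Bel' (⋃₀ ↑S)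
      = ∑ J ∈ S.powerset, (-1:ℝ)^J.card * Bel' (⋃₀ ↑(S \ J)) := by
    intro S hS
    rw [Finset.mem_powerset] at hS
    rw [mOf, TOf_sUnion hA (hS.trans (TOf_subset_atoms 𝒜 A))]
  have hmd := mobius_double (TOf 𝒜 A) (fun S => Bel' (⋃₀ ↑S))
  beta_reduce at hmd
  rw [Finset.sum_congr rfl hm]
  exact hmd.trans (congrArg Bel' (sUnion_TOf hA hmem))

end BelAux
namespace BelAux
variable {Ω : Type*}

lemma mOf_nonneg {𝒜 : Finset (Set Ω)} (hA : IsSetAlgebra (↑𝒜 : Set (Set Ω)))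
    {Bel' : Set Ω → ℝ} (hIcc : ∀ A ∈ (↑𝒜 : Set (Set Ω)), Bel' A ∈ Set.Icc (0:ℝ) 1)
    (h0 : Bel' ∅ = 0) (hCM : CompletelyMonotone (↑𝒜 : Set (Set Ω)) Bel')
    {B : Set Ω} (hmem : B ∈ 𝒜) (hne : B ≠ ∅) : 0 ≤ mOf 𝒜 Bel' B := by
  set T := TOf 𝒜 B with hT
  have hTat : T ⊆ atomsOf 𝒜 := TOf_subset_atoms 𝒜 B
  have hUT : ⋃₀ ↑T = B := sUnion_TOf hA hmem
  have hTne : T.Nonempty := by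
    rw [Finset.nonempty_iff_ne_empty]
    intro h; apply hne; rw [← hUT, h]; simp
  rcases eq_or_lt_of_le (Finset.one_le_card.2 hTne) with h1 | h2
  · -- |T| = 1
    obtain ⟨a, ha⟩ := Finset.card_eq_one.1 h1.symm
    have haB : a = B := by rw [← hUT, ha]; simp
    have : mOf 𝒜 Bel' B = Bel' B := by
      have hps : ({a} : Finset (Set Ω)).powerset = {∅, {a}} := by
        ext J
        simp [Finset.subset_singleton_iff]
      rw [mOf, ← hT, ha, hps]
      rw [Finset.sum_insert (by rw [Finset.mem_singleton]; exact (Finset.singleton_ne_empty a).symm), Finset.sum_singleton]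
      simp [h0, haB]
    rw [this]
    exact (hIcc B hmem).1
  · -- |T| ≥ 2
    set k := T.card with hk
    set e : Fin k → Set Ω := fun i => ((T.equivFin.symm i : {x // x ∈ T}) : Set Ω) with he
    have he_inj : Function.Injective e := fun i j h =>
      T.equivFin.symm.injective (Subtype.ext h)
    have he_mem : ∀ i, e i ∈ T := fun i => (T.equivFin.symm i).2
    have he_surj : ∀ a ∈ T, ∃ i, e i = a := fun a ha =>
      ⟨T.equivFin ⟨a, ha⟩, by simp [he]⟩
    set Af : Fin k → Set Ω := fun i => ⋃₀ ↑(T.erase (e i)) with hAf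
    have hAfmem : ∀ i, Af i ∈ (↑𝒜 : Set (Set Ω)) := by
      intro i
      exact sUnion_mem hA (((Finset.erase_subset _ _).trans hTat).trans (atomsOf_subset 𝒜))
    have hUnion : ⋃ i, Af i = B := by
      apply le_antisymm
      · refine Set.iUnion_subset fun i => ?_
        calc Af i ⊆ ⋃₀ ↑T := Set.sUnion_mono (Finset.coe_subset.2 (Finset.erase_subset _ _))
        _ = B := hUT
      · intro ω hω
        rw [← hUT] at hω
        obtain ⟨a, ha, hωa⟩ := Set.mem_sUnion.1 hω
        rw [Finset.mem_coe] at ha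
        obtain ⟨b, hb, hba⟩ := Finset.exists_mem_ne h2 a
        obtain ⟨i, rfl⟩ := he_surj b hb
        refine Set.mem_iUnion.2 ⟨i, ?_⟩
        refine Set.mem_sUnion.2 ⟨a, ?_, hωa⟩
        rw [Finset.mem_coe, Finset.mem_erase]
        exact ⟨fun h => hba h.symm, ha⟩
    have hInter : ∀ I : Finset (Fin k), I.Nonempty →
        (⋂ i ∈ I, Af i) = ⋃₀ ↑(T \ I.image e) := by
      rintro I ⟨i₀, hi₀⟩
      apply le_antisymm
      · intro ω hω
        rw [Set.mem_iInter₂] at hω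
        obtain ⟨c, hc, hωc⟩ := Set.mem_sUnion.1 (hω i₀ hi₀)
        rw [Finset.mem_coe] at hc
        have hcT : c ∈ T := Finset.mem_of_mem_erase hc
        have hcat : c = atomOf 𝒜 ω := atom_eq_atomOf hA (hTat hcT) hωc
        refine Set.mem_sUnion.2 ⟨c, ?_, hωc⟩
        rw [Finset.mem_coe, Finset.mem_sdiff]
        refine ⟨hcT, fun hcim => ?_⟩
        obtain ⟨i, hiI, hei⟩ := Finset.mem_image.1 hcim
        obtain ⟨d, hd, hωd⟩ := Set.mem_sUnion.1 (hω i hiI)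
        rw [Finset.mem_coe] at hd
        have hdT := Finset.mem_of_mem_erase hd
        have hdc : d = c := (atom_eq_atomOf hA (hTat hdT) hωd).trans hcat.symm
        exact (Finset.ne_of_mem_erase hd) (hdc.trans hei.symm)
      · refine Set.sUnion_subset fun c hc => ?_
        rw [Finset.mem_coe, Finset.mem_sdiff] at hc
        refine Set.subset_iInter₂ fun i hiI => ?_
        refine Set.subset_sUnion_of_mem ?_
        rw [Finset.mem_coe, Finset.mem_erase]
        exact ⟨fun h => hc.2 (Finset.mem_image.2 ⟨i, hiI, h.symm⟩), hc.1⟩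
    have hcm := hCM k h2 Af hAfmem
    rw [hUnion] at hcm
    have hre : ∑ I ∈ Finset.univ.powerset.filter (fun I : Finset (Fin k) => I.Nonempty),
        (-1:ℝ)^(I.card+1) * Bel' (⋂ i ∈ I, Af i)
      = ∑ J ∈ T.powerset.filter (fun J => J.Nonempty),
        (-1:ℝ)^(J.card+1) * Bel' (⋃₀ ↑(T \ J)) := by
      refine Finset.sum_nbij' (fun I => I.image e)
        (fun J => Finset.univ.filter (fun i => e i ∈ J)) ?_ ?_ ?_ ?_ ?_
      · intro I hI
        rw [Finset.mem_filter] at hI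
        rw [Finset.mem_filter, Finset.mem_powerset]
        constructor
        · intro a ha
          obtain ⟨i, _, rfl⟩ := Finset.mem_image.1 ha
          exact he_mem i
        · exact hI.2.image e
      · intro J hJ
        rw [Finset.mem_filter, Finset.mem_powerset] at hJ
        rw [Finset.mem_filter, Finset.mem_powerset]
        refine ⟨Finset.subset_univ _, ?_⟩
        obtain ⟨a, ha⟩ := hJ.2
        obtain ⟨i, rfl⟩ := he_surj a (hJ.1 ha)
        exact ⟨i, Finset.mem_filter.2 ⟨Finset.mem_univ i, ha⟩⟩
      · intro I hI
        ext i
        simp only [Finset.mem_filter, Finset.mem_univ, true_and, Finset.mem_image]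
        constructor
        · rintro ⟨j, hj, hji⟩
          rwa [← he_inj hji]
        · intro hi; exact ⟨i, hi, rfl⟩
      · intro J hJ
        rw [Finset.mem_filter, Finset.mem_powerset] at hJ
        ext a
        simp only [Finset.mem_image, Finset.mem_filter, Finset.mem_univ, true_and]
        constructor
        · rintro ⟨i, hi, rfl⟩; exact hi
        · intro ha
          obtain ⟨i, rfl⟩ := he_surj a (hJ.1 ha)
          exact ⟨i, ha, rfl⟩
      · intro I hI
        rw [Finset.mem_filter] at hI
        rw [Finset.card_image_of_injective I he_inj, hInter I hI.2]
    have hsplit : mOf 𝒜 Bel' B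
        = Bel' B - ∑ J ∈ T.powerset.filter (fun J => J.Nonempty),
            (-1:ℝ)^(J.card+1) * Bel' (⋃₀ ↑(T \ J)) := by
      rw [mOf, ← hT,
        ← Finset.sum_filter_add_sum_filter_not T.powerset (fun J => J.Nonempty)]
      have hempty : T.powerset.filter (fun J => ¬J.Nonempty) = {∅} := by
        ext J
        simp only [Finset.mem_filter, Finset.mem_powerset,
          Finset.not_nonempty_iff_eq_empty, Finset.mem_singleton]
        exact ⟨fun h => h.2, fun h => ⟨h ▸ Finset.empty_subset T, h⟩⟩
      rw [hempty, Finset.sum_singleton]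
      have hEterm : (-1:ℝ)^(∅ : Finset (Set Ω)).card * Bel' (⋃₀ ↑(T \ (∅ : Finset (Set Ω))))
          = Bel' B := by
        simp [hUT]
      rw [hEterm]
      have hneg : ∑ J ∈ T.powerset.filter (fun J => J.Nonempty),
          (-1:ℝ)^J.card * Bel' (⋃₀ ↑(T \ J))
        = - ∑ J ∈ T.powerset.filter (fun J => J.Nonempty),
            (-1:ℝ)^(J.card+1) * Bel' (⋃₀ ↑(T \ J)) := by
        rw [← Finset.sum_neg_distrib]
        refine Finset.sum_congr rfl fun J _ => ?_
        rw [pow_succ]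
        ring
      rw [hneg]
      ring
    rw [hsplit]
    rw [hre] at hcm
    linarith

end BelAux
namespace BelAux
variable {Ω : Type*}

lemma forward_CM {𝒜 : Finset (Set Ω)} {x : Set Ω → ℝ}
    (hx0 : ∀ B ∈ 𝒜.erase ∅, 0 ≤ x B) :
    CompletelyMonotone (↑𝒜 : Set (Set Ω))
      (fun A => ∑ B ∈ (𝒜.erase ∅).filter (fun B => B ⊆ A), x B) := by
  intro k hk Af hAfmem
  classical
  set D := 𝒜.erase ∅ with hD
  have hsf : ∀ A : Set Ω, ∑ B ∈ D.filter (fun B => B ⊆ A), x B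
      = ∑ B ∈ D, if B ⊆ A then x B else 0 := fun A => Finset.sum_filter _ _
  show ∑ I ∈ Finset.univ.powerset.filter (fun I : Finset (Fin k) => I.Nonempty),
      (-1:ℝ)^(I.card+1) * ∑ B ∈ D.filter (fun B => B ⊆ ⋂ i ∈ I, Af i), x B
    ≤ ∑ B ∈ D.filter (fun B => B ⊆ ⋃ i, Af i), x B
  calc ∑ I ∈ Finset.univ.powerset.filter (fun I : Finset (Fin k) => I.Nonempty),
      (-1:ℝ)^(I.card+1) * ∑ B ∈ D.filter (fun B => B ⊆ ⋂ i ∈ I, Af i), x B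
      = ∑ B ∈ D, (∑ I ∈ Finset.univ.powerset.filter (fun I : Finset (Fin k) => I.Nonempty),
          (-1:ℝ)^(I.card+1) * (if B ⊆ ⋂ i ∈ I, Af i then x B else 0)) := by
        have h : ∀ I : Finset (Fin k),
            (-1:ℝ)^(I.card+1) * ∑ B ∈ D.filter (fun B => B ⊆ ⋂ i ∈ I, Af i), x B
            = ∑ B ∈ D, (-1:ℝ)^(I.card+1) * (if B ⊆ ⋂ i ∈ I, Af i then x B else 0) := by
          intro I; rw [hsf, Finset.mul_sum]
        rw [Finset.sum_congr rfl (fun I _ => h I), Finset.sum_comm]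
    _ = ∑ B ∈ D, (1 - if Finset.univ.filter (fun i => B ⊆ Af i) = ∅ then (1:ℝ) else 0) * x B := by
        refine Finset.sum_congr rfl fun B hB => ?_
        set S := Finset.univ.filter (fun i => B ⊆ Af i) with hS
        have hiff : ∀ I : Finset (Fin k), (B ⊆ ⋂ i ∈ I, Af i) ↔ I ⊆ S := by
          intro I
          rw [Set.subset_iInter₂_iff]
          constructor
          · intro h i hi
            rw [hS]; exact Finset.mem_filter.2 ⟨Finset.mem_univ i, h i hi⟩
          · intro h i hi; exact (Finset.mem_filter.1 (h hi)).2
        have h1 : ∀ I : Finset (Fin k),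
            (-1:ℝ)^(I.card+1) * (if B ⊆ ⋂ i ∈ I, Af i then x B else 0)
            = if I ⊆ S then (-1:ℝ)^(I.card+1) * x B else 0 := by
          intro I
          by_cases h : I ⊆ S
          · rw [if_pos h, if_pos ((hiff I).2 h)]
          · rw [if_neg h, if_neg (fun hh => h ((hiff I).1 hh)), mul_zero]
        rw [Finset.sum_congr rfl (fun I _ => h1 I), ← Finset.sum_filter]
        have h2 : (Finset.univ.powerset.filter
              (fun I : Finset (Fin k) => I.Nonempty)).filter (fun I => I ⊆ S)
            = S.powerset.filter (fun I => I.Nonempty) := by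
          ext I
          simp only [Finset.mem_filter, Finset.mem_powerset]
          constructor
          · rintro ⟨⟨-, ha⟩, hb⟩; exact ⟨hb, ha⟩
          · rintro ⟨hb, ha⟩; exact ⟨⟨Finset.subset_univ I, ha⟩, hb⟩
        rw [h2, ← Finset.sum_mul]
        congr 1
        have h3 : ∑ I ∈ S.powerset, (-1:ℝ)^I.card = if S = ∅ then 1 else 0 := by
          convert sum_pow_neg_one_real S using 2
        have h4 : ∑ I ∈ S.powerset, (-1:ℝ)^I.card
            = ∑ I ∈ S.powerset.filter (fun I => I.Nonempty), (-1:ℝ)^I.card + 1 := by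
          rw [← Finset.sum_filter_add_sum_filter_not S.powerset (fun I => I.Nonempty)]
          congr 1
          have hx : S.powerset.filter (fun I => ¬I.Nonempty) = {∅} := by
            ext I
            simp only [Finset.mem_filter, Finset.mem_powerset,
              Finset.not_nonempty_iff_eq_empty, Finset.mem_singleton]
            exact ⟨fun h => h.2, fun h => ⟨h ▸ Finset.empty_subset S, h⟩⟩
          rw [hx, Finset.sum_singleton]
          simp
        have h5 : ∑ I ∈ S.powerset.filter (fun I => I.Nonempty), (-1:ℝ)^(I.card+1)
            = - ∑ I ∈ S.powerset.filter (fun I => I.Nonempty), (-1:ℝ)^I.card := by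
          rw [← Finset.sum_neg_distrib]
          refine Finset.sum_congr rfl fun I _ => ?_
          rw [pow_succ]; ring
        rw [h5]
        linarith [h3, h4]
    _ ≤ ∑ B ∈ D, (if B ⊆ ⋃ i, Af i then x B else 0) := by
        refine Finset.sum_le_sum fun B hB => ?_
        by_cases hSe : Finset.univ.filter (fun i => B ⊆ Af i) = ∅
        · rw [if_pos hSe, sub_self, zero_mul]
          split
          · exact hx0 B hB
          · exact le_rfl
        · rw [if_neg hSe]
          obtain ⟨i, hi⟩ := Finset.nonempty_of_ne_empty hSe
          have hBi : B ⊆ Af i := (Finset.mem_filter.1 hi).2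
          rw [if_pos (hBi.trans (Set.subset_iUnion Af i)), sub_zero, one_mul]
    _ = ∑ B ∈ D.filter (fun B => B ⊆ ⋃ i, Af i), x B := (hsf _).symm

end BelAux

theorem stmt_7 {Ω : Type*} [Nonempty Ω] {n : ℕ}
    (E : Fin n → Set Ω) (Bel : Fin n → ℝ) (hBel : ∀ i, Bel i ∈ Set.Icc (0 : ℝ) 1)
    (𝒜 : Finset (Set Ω)) (h𝒜 : IsGenAlgebraOf 𝒜 (Set.range E)) :
    (∃ x : Set Ω → ℝ,
        (∀ B ∈ 𝒜.erase ∅, 0 ≤ x B) ∧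
        (∑ B ∈ 𝒜.erase ∅, x B) = 1 ∧
        ∀ i, (∑ B ∈ 𝒜.erase ∅, (if B ⊆ E i then (1 : ℝ) else 0) * x B) = Bel i) ↔
      (∃ Bel' : Set Ω → ℝ, IsBelief (↑𝒜) Bel' ∧ ∀ i, Bel' (E i) = Bel i) := by
  classical
  obtain ⟨hA, hE, -⟩ := h𝒜
  have hEmem : ∀ i, E i ∈ 𝒜 := fun i => hE ⟨i, rfl⟩
  have hite : ∀ (x : Set Ω → ℝ) (A : Set Ω),
      (∑ B ∈ 𝒜.erase ∅, (if B ⊆ A then (1 : ℝ) else 0) * x B)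
      = ∑ B ∈ (𝒜.erase ∅).filter (fun B => B ⊆ A), x B := by
    intro x A
    rw [Finset.sum_filter]
    refine Finset.sum_congr rfl fun B _ => ?_
    split <;> ring
  constructor
  · rintro ⟨x, hx0, hx1, hx2⟩
    refine ⟨fun A => ∑ B ∈ (𝒜.erase ∅).filter (fun B => B ⊆ A), x B, ⟨?_, ?_, ?_, ?_⟩, ?_⟩
    · intro A _
      constructor
      · exact Finset.sum_nonneg fun B hB => hx0 B (Finset.mem_filter.1 hB).1
      · calc ∑ B ∈ (𝒜.erase ∅).filter (fun B => B ⊆ A), x B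
            ≤ ∑ B ∈ 𝒜.erase ∅, x B :=
              Finset.sum_le_sum_of_subset_of_nonneg (Finset.filter_subset _ _)
                (fun B hB _ => hx0 B hB)
          _ = 1 := hx1
    · have : (𝒜.erase ∅).filter (fun B => B ⊆ (∅ : Set Ω)) = ∅ := by
        rw [Finset.filter_eq_empty_iff]
        intro B hB hsub
        exact (Finset.mem_erase.1 hB).1 (Set.subset_empty_iff.1 hsub)
      simp only [this, Finset.sum_empty]
    · have : (𝒜.erase ∅).filter (fun B => B ⊆ (Set.univ : Set Ω)) = 𝒜.erase ∅ :=
        Finset.filter_true_of_mem fun B _ => Set.subset_univ B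
      simp only [this]; exact hx1
    · exact BelAux.forward_CM hx0
    · intro i
      show ∑ B ∈ (𝒜.erase ∅).filter (fun B => B ⊆ E i), x B = Bel i
      rw [← hite x (E i)]
      exact hx2 i
  · rintro ⟨Bel', ⟨hIcc, h0, h1, hCM⟩, hBE⟩
    refine ⟨BelAux.mOf 𝒜 Bel', ?_, ?_, ?_⟩
    · intro B hB
      obtain ⟨hBne, hBmem⟩ := Finset.mem_erase.1 hB
      exact BelAux.mOf_nonneg hA hIcc h0 hCM hBmem hBne
    · have huniv : (Set.univ : Set Ω) ∈ 𝒜 := hA.2.1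
      have := BelAux.sum_mOf hA h0 huniv
      rw [Finset.filter_true_of_mem (fun B _ => Set.subset_univ B)] at this
      rw [this, h1]
    · intro i
      rw [hite (BelAux.mOf 𝒜 Bel') (E i), BelAux.sum_mOf hA h0 (hEmem i), hBE i]
end

section
/- Equivalence of consistency and no-Dutch-book for belief assessments (finite case): for a finite assessment Bel : {E₁,…,E_n} → [0,1], the system Σ_{B∈U_F}(min_{ω∈B} 1_{E_i}(ω)) x_B = Bel(E_i), Σ x_B = 1, x_B ≥ 0 has a solution if and only if for every λ₁,…,λ_n ∈ ℝ, max_{B∈U_F} Σᵢ λᵢ((min_{ω∈B} 1_{E_i}(ω)) − Bel(E_i)) ≥ 0. -/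
open scoped Classical

theorem stmt_8 {Ω : Type*} [Nonempty Ω] {n : ℕ}
    (E : Fin n → Set Ω) (Bel : Fin n → ℝ) (hBel : ∀ i, Bel i ∈ Set.Icc (0 : ℝ) 1)
    (𝒜 : Finset (Set Ω)) (h𝒜 : IsGenAlgebraOf 𝒜 (Set.range E)) :
    (∃ x : Set Ω → ℝ,
        (∀ B ∈ 𝒜.erase ∅, 0 ≤ x B) ∧
        (∑ B ∈ 𝒜.erase ∅, x B) = 1 ∧
        ∀ i, (∑ B ∈ 𝒜.erase ∅, (if B ⊆ E i then (1 : ℝ) else 0) * x B) = Bel i) ↔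
      (∀ lam : Fin n → ℝ, ∃ B ∈ 𝒜.erase ∅,
        0 ≤ ∑ i, lam i * ((if B ⊆ E i then (1 : ℝ) else 0) - Bel i)) := by
  set U : Finset (Set Ω) := 𝒜.erase ∅ with hU
  set v : Set Ω → (Fin n → ℝ) :=
    fun B i => (if B ⊆ E i then (1 : ℝ) else 0) - Bel i with hv
  constructor
  · -- LHS → RHS
    rintro ⟨x, hx0, hx1, hxE⟩ lam
    by_contra h
    push_neg at h
    -- All terms are negative; weighted sum is 0, contradiction
    have key : (∑ B ∈ U, x B * ∑ i, lam i * v B i) = 0 := by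
      have step1 : (∑ B ∈ U, x B * ∑ i, lam i * v B i)
          = ∑ B ∈ U, ∑ i, lam i * (v B i * x B) := by
        refine Finset.sum_congr rfl fun B _ => ?_
        rw [Finset.mul_sum]
        refine Finset.sum_congr rfl fun i _ => by ring
      rw [step1, Finset.sum_comm]
      have step2 : ∀ i, (∑ B ∈ U, lam i * (v B i * x B))
          = lam i * ∑ B ∈ U, v B i * x B := fun i => (Finset.mul_sum _ _ _).symm
      rw [Finset.sum_congr rfl fun i _ => step2 i]
      have : ∀ i, (∑ B ∈ U, v B i * x B) = 0 := by
        intro i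
        have h1 : (∑ B ∈ U, v B i * x B)
            = (∑ B ∈ U, (if B ⊆ E i then (1:ℝ) else 0) * x B)
              - Bel i * ∑ B ∈ U, x B := by
          rw [Finset.mul_sum, ← Finset.sum_sub_distrib]
          refine Finset.sum_congr rfl fun B _ => ?_
          show ((if B ⊆ E i then (1:ℝ) else 0) - Bel i) * x B = _
          ring
        rw [h1, hxE i, hx1, mul_one, sub_self]
      simp [this]
    -- but each summand is ≤ 0 with at least one < 0 impossible unless all x B * s B = 0... 
    have hne : ∃ B ∈ U, 0 < x B := by
      by_contra hc
      push_neg at hc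
      have : (∑ B ∈ U, x B) = 0 := by
        apply Finset.sum_eq_zero
        intro B hB
        exact le_antisymm (hc B hB) (hx0 B hB)
      rw [this] at hx1; norm_num at hx1
    obtain ⟨B₀, hB₀, hB₀pos⟩ := hne
    have hlt : (∑ B ∈ U, x B * ∑ i, lam i * v B i) < 0 := by
      have hle : ∀ B ∈ U, x B * (∑ i, lam i * v B i) ≤ 0 := fun B hB =>
        mul_nonpos_of_nonneg_of_nonpos (hx0 B hB) (le_of_lt (h B hB))
      have hlt0 : x B₀ * (∑ i, lam i * v B₀ i) < 0 :=
        mul_neg_of_pos_of_neg hB₀pos (h B₀ hB₀)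
      have := Finset.sum_lt_sum (f := fun B => x B * ∑ i, lam i * v B i)
        (g := fun _ => (0:ℝ)) hle ⟨B₀, hB₀, hlt0⟩
      simpa using this
    exact absurd key (ne_of_lt hlt)
  · -- RHS → LHS
    intro hrhs
    by_contra hlhs
    -- 0 ∉ convexHull of v '' U
    have h0 : (0 : Fin n → ℝ) ∉ convexHull ℝ (↑(U.image v) : Set (Fin n → ℝ)) := by
      intro hmem
      apply hlhs
      rw [Finset.convexHull_eq] at hmem
      obtain ⟨w, hw0, hw1, hwc⟩ := hmem
      -- choose representatives
      have hrep : ∀ y ∈ U.image v, ∃ B ∈ U, v B = y := by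
        intro y hy; simpa using Finset.mem_image.mp hy
      set r : (Fin n → ℝ) → Set Ω :=
        fun y => if h : ∃ B ∈ U, v B = y then h.choose else ∅ with hr
      have hrU : ∀ y ∈ U.image v, r y ∈ U ∧ v (r y) = y := by
        intro y hy
        have h := hrep y hy
        simp only [hr, dif_pos h]
        exact ⟨h.choose_spec.1, h.choose_spec.2⟩
      refine ⟨fun B => ∑ y ∈ (U.image v).filter (r · = B), w y, ?_, ?_, ?_⟩
      · intro B _
        exact Finset.sum_nonneg fun y hy => hw0 y (Finset.mem_filter.mp hy).1
      · rw [Finset.sum_fiberwise_of_maps_to (fun y hy => (hrU y hy).1)]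
        exact hw1
      · intro i
        have hc : (∑ y ∈ U.image v, w y • y) = 0 := by
          rw [← hwc, Finset.centerMass_eq_of_sum_1 _ _ hw1]; rfl
        have hci : (∑ y ∈ U.image v, w y * y i) = 0 := by
          have := congrFun hc i
          simpa using this
        have key : (∑ B ∈ U, (if B ⊆ E i then (1:ℝ) else 0)
            * ∑ y ∈ (U.image v).filter (r · = B), w y)
            = Bel i * (∑ B ∈ U, ∑ y ∈ (U.image v).filter (r · = B), w y) := by
          have lhs_eq : (∑ B ∈ U, v B i * ∑ y ∈ (U.image v).filter (r · = B), w y) = 0 := by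
            have : ∀ B ∈ U, v B i * (∑ y ∈ (U.image v).filter (r · = B), w y)
                = ∑ y ∈ (U.image v).filter (r · = B), w y * y i := by
              intro B hB
              rw [Finset.mul_sum]
              apply Finset.sum_congr rfl
              intro y hy
              obtain ⟨hy1, hy2⟩ := Finset.mem_filter.mp hy
              have := (hrU y hy1).2
              rw [hy2] at this
              rw [← this]; ring
            rw [Finset.sum_congr rfl this,
              Finset.sum_fiberwise_of_maps_to (fun y hy => (hrU y hy).1)]
            exact hci
          have expand : ∀ B, v B i = (if B ⊆ E i then (1:ℝ) else 0) - Bel i := fun B => rfl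
          simp only [expand, sub_mul] at lhs_eq
          rw [Finset.sum_sub_distrib] at lhs_eq
          rw [sub_eq_zero] at lhs_eq
          rw [lhs_eq, Finset.mul_sum]
        rw [key, Finset.sum_fiberwise_of_maps_to (fun y hy => (hrU y hy).1), hw1, mul_one]
    -- separate
    obtain ⟨f, u, hfu, hub⟩ := geometric_hahn_banach_point_closed
      (convex_convexHull ℝ _) ((U.image v).finite_toSet.isClosed_convexHull (𝕜 := ℝ)) h0
    have hu : (0:ℝ) < u := by simpa using hfu
    set lam : Fin n → ℝ := fun i => -(f (fun j => if i = j then (1:ℝ) else 0)) with hlam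
    obtain ⟨B, hB, hBle⟩ := hrhs lam
    have hvB : v B ∈ convexHull ℝ (↑(U.image v) : Set (Fin n → ℝ)) :=
      subset_convexHull ℝ _ (by simp [Finset.mem_image]; exact ⟨B, hB, rfl⟩)
    have hfvB : u < f (v B) := hub _ hvB
    have hdecomp : f (v B) = ∑ i, v B i * f (fun j => if i = j then (1:ℝ) else 0) := by
      conv_lhs => rw [pi_eq_sum_univ (v B)]
      rw [map_sum]
      refine Finset.sum_congr rfl fun i _ => ?_
      rw [map_smul, smul_eq_mul]
    have : (∑ i, lam i * v B i) = -(f (v B)) := by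
      rw [hdecomp, ← Finset.sum_neg_distrib]
      apply Finset.sum_congr rfl
      intro i _
      simp [hlam]; ring
    have hneg : (∑ i, lam i * v B i) < 0 := by
      rw [this]; linarith
    exact absurd hBle (not_le.mpr (by simpa [hv] using hneg))
end

section
/- Coherence implies no uniformly dominating penalty (quadratic scoring): if the assessment d = (Bel(E₁),…,Bel(E_n)) lies in the convex hull of the vectors e^j = (min_{ω∈A_j}1_{E_1}(ω),…,min_{ω∈A_j}1_{E_n}(ω)) for A_j ranging over U_F, then there is no distinct d* ∈ [0,1]ⁿ with ‖e^j − d*‖² < ‖e^j − d‖² for every j. -/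
open scoped Classical

theorem stmt_10 {Ω : Type*} [Nonempty Ω] {n : ℕ}
    (E : Fin n → Set Ω)
    (𝒜 : Finset (Set Ω)) (h𝒜 : IsGenAlgebraOf 𝒜 (Set.range E))
    (e : Set Ω → (Fin n → ℝ))
    (he : ∀ B, e B = fun i => if B ⊆ E i then (1 : ℝ) else 0)
    (d : Fin n → ℝ)
    (hd : d ∈ convexHull ℝ (e '' (↑(𝒜.erase ∅) : Set (Set Ω)))) :
    ¬ ∃ dstar : Fin n → ℝ, (∀ i, dstar i ∈ Set.Icc (0 : ℝ) 1) ∧ dstar ≠ d ∧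
        ∀ B ∈ 𝒜.erase ∅,
          (∑ i, (e B i - dstar i) ^ 2) < ∑ i, (e B i - d i) ^ 2 := by
  rintro ⟨s, _hIcc, hne, hdom⟩
  rw [convexHull_eq] at hd
  obtain ⟨ι, t, w, z, hw0, hw1, hz, hcm⟩ := hd
  have hd' : ∀ i, ∑ j ∈ t, w j * z j i = d i := by
    intro i
    rw [Finset.centerMass_eq_of_sum_1 t z hw1] at hcm
    have := congrFun hcm i
    simpa using this
  have hlt : ∀ j ∈ t, (∑ i, (z j i - s i) ^ 2) < ∑ i, (z j i - d i) ^ 2 := by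
    intro j hj
    obtain ⟨B, hB, hBe⟩ := hz j hj
    rw [← hBe]
    exact hdom B (by exact_mod_cast hB)
  have hS : ∑ j ∈ t, w j * ((∑ i, (z j i - s i) ^ 2) - ∑ i, (z j i - d i) ^ 2) ≤ 0 := by
    apply Finset.sum_nonpos
    intro j hj
    exact mul_nonpos_of_nonneg_of_nonpos (hw0 j hj) (by linarith [hlt j hj])
  have key : ∑ j ∈ t, w j * ((∑ i, (z j i - s i) ^ 2) - ∑ i, (z j i - d i) ^ 2)
      = ∑ i, (d i - s i) ^ 2 := by
    have h1 : ∀ j, (∑ i, (z j i - s i) ^ 2) - ∑ i, (z j i - d i) ^ 2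
        = ∑ i, ((d i - s i) ^ 2 + 2 * (z j i - d i) * (d i - s i)) := by
      intro j
      rw [← Finset.sum_sub_distrib]
      exact Finset.sum_congr rfl (by intros; ring)
    simp only [h1, Finset.mul_sum]
    rw [Finset.sum_comm]
    apply Finset.sum_congr rfl
    intro i _
    have h2 : ∀ j, w j * ((d i - s i) ^ 2 + 2 * (z j i - d i) * (d i - s i))
        = (d i - s i) ^ 2 * w j + (2 * (d i - s i)) * (w j * z j i)
          - (2 * (d i - s i) * d i) * w j := by intro j; ring
    simp only [h2]
    rw [Finset.sum_sub_distrib, Finset.sum_add_distrib, ← Finset.mul_sum, ← Finset.mul_sum,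
      ← Finset.mul_sum, hw1, hd' i]
    ring
  have hpos : 0 < ∑ i, (d i - s i) ^ 2 := by
    have hex : ∃ i, s i ≠ d i := by
      by_contra h
      push_neg at h
      exact hne (funext h)
    obtain ⟨i, hi⟩ := hex
    apply Finset.sum_pos' (fun i _ => sq_nonneg _)
    exact ⟨i, Finset.mem_univ i, by have := sub_ne_zero_of_ne hi.symm; positivity⟩
  linarith [key ▸ hS]
end

section
/- Equivalence of coherence-3 and coherence-5 (finite case): for a finite assessment Bel : {E₁,…,E_n} → [0,1] with d = (Bel(E₁),…,Bel(E_n)) and e^j the vectors of generalized indicators over U_F, the system defining coherence-3 is solvable if and only if there is no distinct assessment d* ∈ [0,1]ⁿ such that Σᵢ((min_{ω∈B}1_{E_i}(ω)) − d*ᵢ)² < Σᵢ((min_{ω∈B}1_{E_i}(ω)) − dᵢ)² for every B ∈ U_F. -/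
open scoped Classical

lemma sumsq_eq_norm_sq {n : ℕ} (y x : EuclideanSpace ℝ (Fin n)) :
    ∑ i, (y i - x i) ^ 2 = ‖y - x‖ ^ 2 := by
  rw [← real_inner_self_eq_norm_sq, PiLp.inner_apply]
  simp [RCLike.inner_apply, sq]

lemma key {n : ℕ} (S : Set (EuclideanSpace ℝ (Fin n))) (hfin : S.Finite) (hne : S.Nonempty)
    (hbox : ∀ y ∈ S, ∀ i, y i ∈ Set.Icc (0:ℝ) 1) (d : EuclideanSpace ℝ (Fin n)) :
    d ∈ convexHull ℝ S ↔
      ¬ ∃ x : EuclideanSpace ℝ (Fin n), (∀ i, x i ∈ Set.Icc (0:ℝ) 1) ∧ x ≠ d ∧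
        ∀ y ∈ S, ∑ i, (y i - x i) ^ 2 < ∑ i, (y i - d i) ^ 2 := by
  constructor
  · rintro hmem ⟨x, hx01, hxne, hlt⟩
    rw [← hfin.coe_toFinset, Finset.convexHull_eq] at hmem
    obtain ⟨w, hw0, hw1, hcm⟩ := hmem
    rw [Finset.centerMass_eq_of_sum_1 _ _ hw1] at hcm
    have hq : ∀ u : EuclideanSpace ℝ (Fin n),
        ∑ y ∈ hfin.toFinset, w y * ‖y - u‖ ^ 2
          = (∑ y ∈ hfin.toFinset, w y * ‖y‖ ^ 2) - 2 * inner ℝ d u + ‖u‖ ^ 2 := by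
      intro u
      have : ∀ y ∈ hfin.toFinset, w y * ‖y - u‖ ^ 2
          = w y * ‖y‖ ^ 2 - 2 * (inner ℝ (w y • y) u : ℝ) + w y * ‖u‖ ^ 2 := by
        intro y _
        rw [@norm_sub_sq_real, inner_smul_left]
        simp only [conj_trivial]
        ring
      simp only [id_eq] at hcm
      rw [Finset.sum_congr rfl this]
      rw [Finset.sum_add_distrib, Finset.sum_sub_distrib, ← Finset.sum_mul, hw1,
        ← Finset.mul_sum, ← sum_inner, hcm]
      ring
    have hpos : ∃ y ∈ hfin.toFinset, 0 < w y := by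
      by_contra h
      push_neg at h
      have : ∑ y ∈ hfin.toFinset, w y = 0 :=
        Finset.sum_eq_zero fun y hy => le_antisymm (h y hy) (hw0 y hy)
      exact one_ne_zero (this ▸ hw1).symm
    obtain ⟨y0, hy0, hwy0⟩ := hpos
    have hstrict : ∑ y ∈ hfin.toFinset, w y * ‖y - x‖ ^ 2
        < ∑ y ∈ hfin.toFinset, w y * ‖y - d‖ ^ 2 := by
      apply Finset.sum_lt_sum
      · intro y hy
        have := hlt y (hfin.mem_toFinset.mp hy)
        rw [sumsq_eq_norm_sq, sumsq_eq_norm_sq] at this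
        exact mul_le_mul_of_nonneg_left this.le (hw0 y hy)
      · refine ⟨y0, hy0, ?_⟩
        have := hlt y0 (hfin.mem_toFinset.mp hy0)
        rw [sumsq_eq_norm_sq, sumsq_eq_norm_sq] at this
        exact mul_lt_mul_of_pos_left this hwy0
    rw [hq x, hq d] at hstrict
    have hdd : (inner ℝ d d : ℝ) = ‖d‖ ^ 2 := real_inner_self_eq_norm_sq d
    have h2 : ‖x - d‖ ^ 2 < 0 := by
      rw [@norm_sub_sq_real]
      have : (inner ℝ x d : ℝ) = inner ℝ d x := (real_inner_comm x d).symm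
      nlinarith
    nlinarith [sq_nonneg ‖x - d‖]
  · intro h
    by_contra hmem
    apply h
    set K := convexHull ℝ S with hK
    have hKconv : Convex ℝ K := convex_convexHull ℝ S
    have hKne : K.Nonempty := hne.mono (subset_convexHull ℝ S)
    have hKcompl : IsComplete K := (hfin.isCompact_convexHull ℝ).isComplete
    obtain ⟨v, hvK, hv⟩ := exists_norm_eq_iInf_of_complete_convex hKne hKcompl hKconv d
    rw [norm_eq_iInf_iff_real_inner_le_zero hKconv hvK] at hv
    have hvbox : ∀ i, v i ∈ Set.Icc (0:ℝ) 1 := by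
      have hsub : K ⊆ {x : EuclideanSpace ℝ (Fin n) | ∀ i, x i ∈ Set.Icc (0:ℝ) 1} := by
        apply convexHull_min
        · intro y hy i; exact hbox y hy i
        · have hset : {x : EuclideanSpace ℝ (Fin n) | ∀ i, x i ∈ Set.Icc (0:ℝ) 1}
              = (WithLp.ofLp (p := 2)) ⁻¹' Set.pi Set.univ (fun _ : Fin n => Set.Icc (0:ℝ) 1) := by
            ext x; exact (Set.mem_univ_pi).symm
          rw [hset]
          exact (convex_pi fun i _ => convex_Icc 0 1).linear_preimage
              (WithLp.linearEquiv 2 ℝ (Fin n → ℝ)).toLinearMap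
      exact hsub hvK
    refine ⟨v, hvbox, fun hvd => hmem (hvd ▸ hvK), ?_⟩
    intro y hy
    have hyK : y ∈ K := subset_convexHull ℝ S hy
    rw [sumsq_eq_norm_sq, sumsq_eq_norm_sq]
    have hdec : y - d = (y - v) + (v - d) := by abel
    rw [hdec, @norm_add_sq_real]
    have h1 : (inner ℝ (y - v) (v - d) : ℝ) ≥ 0 := by
      have := hv y hyK
      have heq : (inner ℝ (y - v) (v - d) : ℝ) = - inner ℝ (d - v) (y - v) := by
        rw [real_inner_comm]
        rw [show v - d = -(d - v) by abel, inner_neg_left]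
      linarith [heq ▸ neg_nonneg.mpr this]
    have h2 : 0 < ‖v - d‖ ^ 2 := by
      have hne0 : v - d ≠ 0 := sub_ne_zero.mpr (fun hvd => hmem (hvd ▸ hvK))
      exact pow_pos (norm_pos_iff.mpr hne0) 2
    nlinarith [norm_nonneg (y - v)]

theorem stmt_13 {Ω : Type*} [Nonempty Ω] {n : ℕ}
    (E : Fin n → Set Ω) (Bel : Fin n → ℝ) (hBel : ∀ i, Bel i ∈ Set.Icc (0 : ℝ) 1)
    (𝒜 : Finset (Set Ω)) (h𝒜 : IsGenAlgebraOf 𝒜 (Set.range E))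
    (e : Set Ω → (Fin n → ℝ))
    (he : ∀ B, e B = fun i => if B ⊆ E i then (1 : ℝ) else 0)
    (d : Fin n → ℝ) (hd : d = fun i => Bel i) :
    d ∈ convexHull ℝ (e '' (↑(𝒜.erase ∅) : Set (Set Ω))) ↔
      ¬ ∃ dstar : Fin n → ℝ, (∀ i, dstar i ∈ Set.Icc (0 : ℝ) 1) ∧ dstar ≠ d ∧
          ∀ B ∈ 𝒜.erase ∅,
            (∑ i, (e B i - dstar i) ^ 2) < ∑ i, (e B i - d i) ^ 2 := by
  have hfin : (WithLp.toLp 2 '' (e '' (↑(𝒜.erase ∅) : Set (Set Ω))) :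
      Set (EuclideanSpace ℝ (Fin n))).Finite := ((Finset.finite_toSet _).image e).image _
  have hne : (WithLp.toLp 2 '' (e '' (↑(𝒜.erase ∅) : Set (Set Ω))) :
      Set (EuclideanSpace ℝ (Fin n))).Nonempty := by
    refine ⟨WithLp.toLp 2 (e Set.univ), Set.mem_image_of_mem _ (Set.mem_image_of_mem e ?_)⟩
    rw [Finset.mem_coe, Finset.mem_erase]
    exact ⟨(Set.empty_ne_univ).symm, h𝒜.1.2.1⟩
  have hbox : ∀ y ∈ (WithLp.toLp 2 '' (e '' (↑(𝒜.erase ∅) : Set (Set Ω))) :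
      Set (EuclideanSpace ℝ (Fin n))), ∀ i, y i ∈ Set.Icc (0:ℝ) 1 := by
    rintro _ ⟨_, ⟨B, hB, rfl⟩, rfl⟩ i
    show e B i ∈ _
    rw [he B]
    by_cases hBi : B ⊆ E i <;> simp [hBi]
  have hconv : d ∈ convexHull ℝ (e '' (↑(𝒜.erase ∅) : Set (Set Ω))) ↔
      WithLp.toLp 2 d ∈ convexHull ℝ (WithLp.toLp 2 '' (e '' (↑(𝒜.erase ∅) : Set (Set Ω)))) := by
    have := (WithLp.linearEquiv 2 ℝ (Fin n → ℝ)).symm.toLinearMap.image_convexHull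
      (e '' (↑(𝒜.erase ∅) : Set (Set Ω)))
    rw [LinearEquiv.coe_coe, WithLp.coe_symm_linearEquiv] at this
    rw [← this, Function.Injective.mem_set_image (fun a b h => congrArg WithLp.ofLp h)]
  refine hconv.trans (Iff.trans (key _ hfin hne hbox _) (not_congr
    ⟨fun ⟨x, hx01, hxne, hlt⟩ => ⟨WithLp.ofLp x, hx01, fun h => hxne (by rw [← h]),
      fun B hB => hlt _ ⟨_, ⟨B, hB, rfl⟩, rfl⟩⟩,
     fun ⟨x, hx01, hxne, hlt⟩ => ⟨WithLp.toLp 2 x, hx01, fun h => hxne (congrArg WithLp.ofLp h),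
      by rintro _ ⟨_, ⟨B, hB, rfl⟩, rfl⟩; exact hlt B hB⟩⟩))
end

section
/- If coherence conditions hold for the whole finite family, they hold for all subfamilies: if the linear system S_E (for E = {E₁,…,E_n}) defining coherence-3 is solvable, then for every non-empty subset F ⊆ E the system S_F is solvable. -/
open scoped Classical

lemma sInter_mem_of_setAlgebra {Ω : Type*} {𝒜 : Finset (Set Ω)}
    (h : IsSetAlgebra (↑𝒜 : Set (Set Ω))) :
    ∀ T : Finset (Set Ω), T ⊆ 𝒜 → ⋂₀ ↑T ∈ 𝒜 := by
  intro T
  induction T using Finset.induction_on with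
  | empty => intro _; simpa using h.2.1
  | @insert a s ha ih =>
    intro hT
    have ha' : a ∈ 𝒜 := hT (Finset.mem_insert_self a s)
    have hs : s ⊆ 𝒜 := fun x hx => hT (Finset.mem_insert_of_mem hx)
    have := h.2.2.2.1 a (by exact_mod_cast ha') (⋂₀ ↑s) (by exact_mod_cast ih hs)
    simpa [Set.sInter_insert] using this

theorem stmt_14 {Ω : Type*} [Nonempty Ω] {n : ℕ}
    (E : Fin n → Set Ω) (Bel : Fin n → ℝ)
    (𝒜E : Finset (Set Ω)) (h𝒜E : IsGenAlgebraOf 𝒜E (Set.range E))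
    (hsolv : ∃ x : Set Ω → ℝ,
      (∀ B ∈ 𝒜E.erase ∅, 0 ≤ x B) ∧
      (∑ B ∈ 𝒜E.erase ∅, x B) = 1 ∧
      ∀ i, (∑ B ∈ 𝒜E.erase ∅, (if B ⊆ E i then (1 : ℝ) else 0) * x B) = Bel i) :
    ∀ S : Finset (Fin n), S.Nonempty →
      ∀ 𝒜F : Finset (Set Ω), IsGenAlgebraOf 𝒜F (E '' ↑S) →
        ∃ x : Set Ω → ℝ,
          (∀ B ∈ 𝒜F.erase ∅, 0 ≤ x B) ∧
          (∑ B ∈ 𝒜F.erase ∅, x B) = 1 ∧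
          ∀ i ∈ S, (∑ B ∈ 𝒜F.erase ∅, (if B ⊆ E i then (1 : ℝ) else 0) * x B) = Bel i := by
  obtain ⟨x, hx0, hx1, hxB⟩ := hsolv
  intro S hS 𝒜F h𝒜F
  -- φ B = smallest element of 𝒜F containing B
  set φ : Set Ω → Set Ω := fun B => ⋂₀ ↑(𝒜F.filter (fun C => B ⊆ C)) with hφ
  have hφmem : ∀ B : Set Ω, φ B ∈ 𝒜F := fun B =>
    sInter_mem_of_setAlgebra h𝒜F.1 _ (Finset.filter_subset _ _)
  have hφsub : ∀ B : Set Ω, B ⊆ φ B := by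
    intro B
    apply Set.subset_sInter
    intro C hC
    exact (Finset.mem_filter.mp (by exact_mod_cast hC)).2
  have hφmin : ∀ (B C : Set Ω), C ∈ 𝒜F → B ⊆ C → φ B ⊆ C := by
    intro B C hC hBC
    exact Set.sInter_subset_of_mem (by exact_mod_cast Finset.mem_filter.mpr ⟨hC, hBC⟩)
  have hEmem : ∀ i ∈ S, E i ∈ 𝒜F := by
    intro i hi
    exact_mod_cast h𝒜F.2.1 ⟨i, hi, rfl⟩
  have hiff : ∀ (B : Set Ω), ∀ i ∈ S, (B ⊆ E i ↔ φ B ⊆ E i) := by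
    intro B i hi
    exact ⟨fun h => hφmin B _ (hEmem i hi) h, fun h => (hφsub B).trans h⟩
  have hmaps : ∀ B ∈ 𝒜E.erase ∅, φ B ∈ 𝒜F.erase ∅ := by
    intro B hB
    rw [Finset.mem_erase] at hB ⊢
    refine ⟨?_, hφmem B⟩
    intro h
    exact hB.1 (Set.subset_eq_empty (h ▸ hφsub B) rfl)
  refine ⟨fun C => ∑ B ∈ (𝒜E.erase ∅).filter (fun B => φ B = C), x B, ?_, ?_, ?_⟩
  · intro C _
    exact Finset.sum_nonneg fun B hB => hx0 B (Finset.mem_filter.mp hB).1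
  · rw [Finset.sum_fiberwise_of_maps_to hmaps, hx1]
  · intro i hi
    rw [← hxB i]
    rw [← Finset.sum_fiberwise_of_maps_to hmaps
      (fun B => (if B ⊆ E i then (1 : ℝ) else 0) * x B)]
    refine Finset.sum_congr rfl fun C _ => ?_
    rw [Finset.mul_sum]
    refine Finset.sum_congr rfl fun B hB => ?_
    have hBC : φ B = C := (Finset.mem_filter.mp hB).2
    congr 1
    rw [if_congr ((hiff B i hi).trans (by rw [hBC])) rfl rfl]
end

section
/- Coherent extension via compactness: if Bel : E → [0,1] is an assessment on an arbitrary non-empty family E of subsets of Ω such that for every finite F ⊆ E there is a belief function on algebra(F) extending Bel|_F, then there exists a belief function Bel' on algebra(E) extending Bel. -/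
open scoped Classical

/-- The algebra of subsets of `Ω` generated by the family `𝒢`. -/
def algGen {Ω : Type*} (𝒢 : Set (Set Ω)) : Set (Set Ω) :=
  ⋂₀ {ℬ | IsSetAlgebra ℬ ∧ 𝒢 ⊆ ℬ}

lemma isSetAlgebra_algGen {Ω : Type*} (𝒢 : Set (Set Ω)) : IsSetAlgebra (algGen 𝒢) :=
  ⟨fun ℬ hℬ => hℬ.1.1, fun ℬ hℬ => hℬ.1.2.1,
    fun A hA ℬ hℬ => hℬ.1.2.2.1 A (hA ℬ hℬ),
    fun A hA B hB ℬ hℬ => hℬ.1.2.2.2.1 A (hA ℬ hℬ) B (hB ℬ hℬ),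
    fun A hA B hB ℬ hℬ => hℬ.1.2.2.2.2 A (hA ℬ hℬ) B (hB ℬ hℬ)⟩

lemma subset_algGen {Ω : Type*} (𝒢 : Set (Set Ω)) : 𝒢 ⊆ algGen 𝒢 :=
  fun _ hA ℬ hℬ => hℬ.2 hA

lemma algGen_subset {Ω : Type*} {𝒢 ℬ : Set (Set Ω)} (hℬ : IsSetAlgebra ℬ) (h : 𝒢 ⊆ ℬ) :
    algGen 𝒢 ⊆ ℬ := fun _ hA => hA ℬ ⟨hℬ, h⟩

lemma algGen_mono {Ω : Type*} {𝒢 ℋ : Set (Set Ω)} (h : 𝒢 ⊆ ℋ) : algGen 𝒢 ⊆ algGen ℋ :=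
  algGen_subset (isSetAlgebra_algGen ℋ) (h.trans (subset_algGen ℋ))

lemma IsSetAlgebra.finsetInter {Ω ι : Type*} {𝒜 : Set (Set Ω)} (h𝒜 : IsSetAlgebra 𝒜)
    {I : Finset ι} (hI : I.Nonempty) {A : ι → Set Ω} (hA : ∀ i ∈ I, A i ∈ 𝒜) :
    (⋂ i ∈ I, A i) ∈ 𝒜 := by
  classical
  induction I using Finset.induction_on with
  | empty => exact absurd hI (by simp)
  | insert a s hnotmem ih =>
    rcases s.eq_empty_or_nonempty with rfl | hs
    · simpa using hA a (by simp)
    · rw [Finset.set_biInter_insert]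
      exact h𝒜.2.2.2.1 _ (hA a (by simp)) _ (ih hs fun i hi => hA i (by simp [hi]))

lemma IsSetAlgebra.finsetUnion {Ω ι : Type*} {𝒜 : Set (Set Ω)} (h𝒜 : IsSetAlgebra 𝒜)
    {I : Finset ι} (hI : I.Nonempty) {A : ι → Set Ω} (hA : ∀ i ∈ I, A i ∈ 𝒜) :
    (⋃ i ∈ I, A i) ∈ 𝒜 := by
  classical
  induction I using Finset.induction_on with
  | empty => exact absurd hI (by simp)
  | insert a s hnotmem ih =>
    rcases s.eq_empty_or_nonempty with rfl | hs
    · simpa using hA a (by simp)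
    · rw [Finset.set_biUnion_insert]
      exact h𝒜.2.2.2.2 _ (hA a (by simp)) _ (ih hs fun i hi => hA i (by simp [hi]))

lemma IsSetAlgebra.iUnion_fin {Ω : Type*} {𝒜 : Set (Set Ω)} (h𝒜 : IsSetAlgebra 𝒜)
    {k : ℕ} (hk : 0 < k) {A : Fin k → Set Ω} (hA : ∀ i, A i ∈ 𝒜) :
    (⋃ i, A i) ∈ 𝒜 := by
  haveI : Nonempty (Fin k) := ⟨⟨0, hk⟩⟩
  have : (⋃ i, A i) = ⋃ i ∈ (Finset.univ : Finset (Fin k)), A i := by simp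
  rw [this]
  exact h𝒜.finsetUnion Finset.univ_nonempty fun i _ => hA i

lemma mem_algGen_iff_finite {Ω : Type*} (ℰ : Set (Set Ω)) (A : Set Ω) :
    A ∈ algGen ℰ ↔ ∃ F : Finset (Set Ω), ↑F ⊆ ℰ ∧ A ∈ algGen (↑F : Set (Set Ω)) := by
  constructor
  · intro hA
    have hB : IsSetAlgebra {A : Set Ω | ∃ F : Finset (Set Ω), ↑F ⊆ ℰ ∧
        A ∈ algGen (↑F : Set (Set Ω))} := by
      refine ⟨⟨∅, by simp, (isSetAlgebra_algGen _).1⟩,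
        ⟨∅, by simp, (isSetAlgebra_algGen _).2.1⟩, ?_, ?_, ?_⟩
      · rintro A ⟨F, hF, hA⟩; exact ⟨F, hF, (isSetAlgebra_algGen _).2.2.1 A hA⟩
      · rintro A ⟨F, hF, hA⟩ B ⟨G, hG, hB⟩
        refine ⟨F ∪ G, by rw [Finset.coe_union]; exact Set.union_subset hF hG,
          (isSetAlgebra_algGen _).2.2.2.1 A ?_ B ?_⟩
        · exact algGen_mono (by rw [Finset.coe_union]; exact Set.subset_union_left) hA
        · exact algGen_mono (by rw [Finset.coe_union]; exact Set.subset_union_right) hB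
      · rintro A ⟨F, hF, hA⟩ B ⟨G, hG, hB⟩
        refine ⟨F ∪ G, by rw [Finset.coe_union]; exact Set.union_subset hF hG,
          (isSetAlgebra_algGen _).2.2.2.2 A ?_ B ?_⟩
        · exact algGen_mono (by rw [Finset.coe_union]; exact Set.subset_union_left) hA
        · exact algGen_mono (by rw [Finset.coe_union]; exact Set.subset_union_right) hB
    exact algGen_subset hB
      (fun E hE => ⟨{E}, by simpa using hE, subset_algGen _ (by simp)⟩) hA
  · rintro ⟨F, hF, hA⟩
    exact algGen_mono hF hA

/-- The candidate set of extensions for a finite subfamily. -/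
def belSet {Ω : Type*} (Bel : Set Ω → ℝ) (F : Finset (Set Ω)) :
    Set (Set Ω → Set.Icc (0 : ℝ) 1) :=
  {f | IsBelief (algGen (↑F : Set (Set Ω))) (fun A => (f A : ℝ)) ∧ ∀ E ∈ F, (f E : ℝ) = Bel E}

lemma belSet_anti {Ω : Type*} (Bel : Set Ω → ℝ) {F G : Finset (Set Ω)} (hFG : F ⊆ G) :
    belSet Bel G ⊆ belSet Bel F := by
  rintro f ⟨⟨hIcc, h0, h1, hcm⟩, hext⟩
  have hsub : algGen (↑F : Set (Set Ω)) ⊆ algGen (↑G : Set (Set Ω)) :=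
    algGen_mono (Finset.coe_subset.mpr hFG)
  exact ⟨⟨fun A hA => hIcc A (hsub hA), h0, h1,
    fun k hk A hA => hcm k hk A fun i => hsub (hA i)⟩, fun E hE => hext E (hFG hE)⟩

lemma belSet_isClosed {Ω : Type*} (Bel : Set Ω → ℝ) (F : Finset (Set Ω)) :
    IsClosed (belSet Bel F) := by
  have heval : ∀ A : Set Ω, Continuous fun f : Set Ω → Set.Icc (0 : ℝ) 1 => (f A : ℝ) :=
    fun A => continuous_subtype_val.comp (continuous_apply A)
  have : belSet Bel F =
      ({f : Set Ω → Set.Icc (0 : ℝ) 1 | (f ∅ : ℝ) = 0} ∩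
        {f : Set Ω → Set.Icc (0 : ℝ) 1 | (f Set.univ : ℝ) = 1} ∩
        (⋂ (k : ℕ) (_ : 2 ≤ k) (A : Fin k → Set Ω)
          (_ : ∀ i, A i ∈ algGen (↑F : Set (Set Ω))),
          {f : Set Ω → Set.Icc (0 : ℝ) 1 |
            ∑ I ∈ Finset.univ.powerset.filter (fun I : Finset (Fin k) => I.Nonempty),
              (-1 : ℝ) ^ (I.card + 1) * (f (⋂ i ∈ I, A i) : ℝ) ≤ (f (⋃ i, A i) : ℝ)}) ∩
        ⋂ (E : Set Ω) (_ : E ∈ F),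
          {f : Set Ω → Set.Icc (0 : ℝ) 1 | (f E : ℝ) = Bel E}) := by
    ext f
    simp only [belSet, IsBelief, CompletelyMonotone, Set.mem_setOf_eq, Set.mem_inter_iff,
      Set.mem_iInter]
    constructor
    · rintro ⟨⟨-, h0, h1, hcm⟩, hext⟩
      exact ⟨⟨⟨h0, h1⟩, hcm⟩, hext⟩
    · rintro ⟨⟨⟨h0, h1⟩, hcm⟩, hext⟩
      exact ⟨⟨fun A _ => (f A).2, h0, h1, hcm⟩, hext⟩
  rw [this]
  refine (((isClosed_eq (heval _) continuous_const).inter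
    (isClosed_eq (heval _) continuous_const)).inter
    (isClosed_iInter fun k => isClosed_iInter fun _ => isClosed_iInter fun A =>
      isClosed_iInter fun _ => isClosed_le
        (continuous_finset_sum _ fun I _ => continuous_const.mul (heval _)) (heval _))).inter
    (isClosed_iInter fun E => isClosed_iInter fun _ => isClosed_eq (heval _) continuous_const)
lemma belSet_nonempty {Ω : Type*} {Bel : Set Ω → ℝ} {F : Finset (Set Ω)}
    (hF : ∃ Bel' : Set Ω → ℝ, IsBelief (algGen (↑F : Set (Set Ω))) Bel' ∧
      ∀ E ∈ F, Bel' E = Bel E) :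
    (belSet Bel F).Nonempty := by
  obtain ⟨B, ⟨hIcc, h0, h1, hcm⟩, hext⟩ := hF
  have halg := isSetAlgebra_algGen (↑F : Set (Set Ω))
  have key : ∀ A ∈ algGen (↑F : Set (Set Ω)),
      ((Set.projIcc (0 : ℝ) 1 zero_le_one (B A) : Set.Icc (0 : ℝ) 1) : ℝ) = B A := by
    intro A hA
    rw [Set.projIcc_of_mem _ (hIcc A hA)]
  refine ⟨fun A => Set.projIcc (0 : ℝ) 1 zero_le_one (B A), ⟨?_, ?_, ?_, ?_⟩, ?_⟩
  · intro A hA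
    show ((Set.projIcc (0 : ℝ) 1 zero_le_one (B A) : Set.Icc (0 : ℝ) 1) : ℝ) ∈ Set.Icc (0 : ℝ) 1
    rw [key A hA]; exact hIcc A hA
  · show ((Set.projIcc (0 : ℝ) 1 zero_le_one (B ∅) : Set.Icc (0 : ℝ) 1) : ℝ) = 0
    rw [key _ halg.1, h0]
  · show ((Set.projIcc (0 : ℝ) 1 zero_le_one (B Set.univ) : Set.Icc (0 : ℝ) 1) : ℝ) = 1
    rw [key _ halg.2.1, h1]
  · intro k hk A hA
    have hU : (⋃ i, A i) ∈ algGen (↑F : Set (Set Ω)) := halg.iUnion_fin (by omega) hA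
    show ∑ I ∈ Finset.univ.powerset.filter (fun I : Finset (Fin k) => I.Nonempty),
        (-1 : ℝ) ^ (I.card + 1) *
          ((Set.projIcc (0 : ℝ) 1 zero_le_one (B (⋂ i ∈ I, A i)) : Set.Icc (0 : ℝ) 1) : ℝ)
        ≤ ((Set.projIcc (0 : ℝ) 1 zero_le_one (B (⋃ i, A i)) : Set.Icc (0 : ℝ) 1) : ℝ)
    rw [key _ hU]
    refine le_trans (le_of_eq (Finset.sum_congr rfl fun I hI => ?_)) (hcm k hk A hA)
    rw [key _ (halg.finsetInter (Finset.mem_filter.mp hI).2 fun i _ => hA i)]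
  · intro E hE
    show ((Set.projIcc (0 : ℝ) 1 zero_le_one (B E) : Set.Icc (0 : ℝ) 1) : ℝ) = Bel E
    rw [key _ (subset_algGen _ (by simpa using hE)), hext E hE]
theorem stmt_15 {Ω : Type*} [Nonempty Ω] (ℰ : Set (Set Ω)) (hne : ℰ.Nonempty)
    (Bel : Set Ω → ℝ) (hBel : ∀ E ∈ ℰ, Bel E ∈ Set.Icc (0 : ℝ) 1)
    (h : ∀ F : Finset (Set Ω), ↑F ⊆ ℰ →
      ∃ Bel' : Set Ω → ℝ, IsBelief (algGen (↑F : Set (Set Ω))) Bel' ∧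
        ∀ E ∈ F, Bel' E = Bel E) :
    ∃ Bel' : Set Ω → ℝ, IsBelief (algGen ℰ) Bel' ∧ ∀ E ∈ ℰ, Bel' E = Bel E := by
  classical
  haveI : Nonempty {F : Finset (Set Ω) // ↑F ⊆ ℰ} := ⟨⟨∅, by simp⟩⟩
  obtain ⟨f, hf⟩ := IsCompact.nonempty_iInter_of_directed_nonempty_isCompact_isClosed
    (fun F : {F : Finset (Set Ω) // ↑F ⊆ ℰ} => belSet Bel F.1)
    (fun F G => ⟨⟨F.1 ∪ G.1, by rw [Finset.coe_union]; exact Set.union_subset F.2 G.2⟩,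
      belSet_anti Bel Finset.subset_union_left, belSet_anti Bel Finset.subset_union_right⟩)
    (fun F => belSet_nonempty (h F.1 F.2))
    (fun F => (belSet_isClosed Bel F.1).isCompact)
    (fun F => belSet_isClosed Bel F.1)
  simp only [Set.mem_iInter] at hf
  refine ⟨fun A => (f A : ℝ), ⟨fun A hA => (f A).2, ?_, ?_, ?_⟩, ?_⟩
  · exact (hf ⟨∅, by simp⟩).1.2.1
  · exact (hf ⟨∅, by simp⟩).1.2.2.1
  · intro k hk A hA
    choose F hFsub hFmem using fun i => (mem_algGen_iff_finite ℰ (A i)).mp (hA i)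
    have hGsub : ↑(Finset.univ.biUnion F) ⊆ ℰ := by
      intro x hx
      simp only [Finset.coe_biUnion, Set.mem_iUnion, Finset.mem_coe] at hx
      obtain ⟨i, _, hx⟩ := hx
      exact hFsub i hx
    have hmem : ∀ i, A i ∈ algGen (↑(Finset.univ.biUnion F) : Set (Set Ω)) := fun i =>
      algGen_mono (Finset.coe_subset.mpr (Finset.subset_biUnion_of_mem F (Finset.mem_univ i)))
        (hFmem i)
    exact (hf ⟨Finset.univ.biUnion F, hGsub⟩).1.2.2.2 k hk A hmem
  · intro E hE
    exact (hf ⟨{E}, by simpa using hE⟩).2 E (Finset.mem_singleton_self E)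
end

section
/- Chain representation of necessity measures on a finite algebra: a set function N on a finite algebra A with atoms C₁,…,C_m is a finitely minitive necessity measure if and only if there exist a permutation (i₁,…,i_m) of (1,…,m) and non-negative weights x₁,…,x_m summing to 1 such that, with D_r = C_{i₁}∪⋯∪C_{i_r}, N(A) = Σ_{r : D_r ⊆ A} x_r for every A ∈ A (i.e., the Möbius inverse of N is supported on the chain D₁ ⊆ D₂ ⊆ ⋯ ⊆ D_m = Ω). -/
open scoped Classical

/-- `C` is an atom of the finite algebra `𝒜`. -/
def IsAtomOf {Ω : Type*} (𝒜 : Finset (Set Ω)) (C : Set Ω) : Prop :=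
  C ∈ 𝒜 ∧ C ≠ ∅ ∧ ∀ B ∈ 𝒜, B ⊆ C → B = ∅ ∨ B = C

private lemma biInter_mem' {Ω : Type*} {𝒜 : Finset (Set Ω)} (hUniv : Set.univ ∈ 𝒜)
    (hinter : ∀ A ∈ 𝒜, ∀ B ∈ 𝒜, A ∩ B ∈ 𝒜) {ι : Type*} (S : Finset ι) (B : ι → Set Ω)
    (h : ∀ i ∈ S, B i ∈ 𝒜) : (⋂ i ∈ S, B i) ∈ 𝒜 := by
  classical
  induction S using Finset.induction with
  | empty => simpa using hUniv
  | @insert a s ha ih =>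
    rw [Finset.set_biInter_insert]
    exact hinter _ (h a (Finset.mem_insert_self a s)) _
      (ih fun i hi => h i (Finset.mem_insert_of_mem hi))

private lemma biUnion_mem' {Ω : Type*} {𝒜 : Finset (Set Ω)} (hEmp : ∅ ∈ 𝒜)
    (hunion : ∀ A ∈ 𝒜, ∀ B ∈ 𝒜, A ∪ B ∈ 𝒜) {ι : Type*} (S : Finset ι) (B : ι → Set Ω)
    (h : ∀ i ∈ S, B i ∈ 𝒜) : (⋃ i ∈ S, B i) ∈ 𝒜 := by
  classical
  induction S using Finset.induction with
  | empty => simpa using hEmp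
  | @insert a s ha ih =>
    rw [Finset.set_biUnion_insert]
    exact hunion _ (h a (Finset.mem_insert_self a s)) _
      (ih fun i hi => h i (Finset.mem_insert_of_mem hi))

private lemma N_biInter' {Ω : Type*} {𝒜 : Finset (Set Ω)} {N : Set Ω → ℝ}
    (hUniv : Set.univ ∈ 𝒜) (hinter : ∀ A ∈ 𝒜, ∀ B ∈ 𝒜, A ∩ B ∈ 𝒜)
    (hmin : ∀ A ∈ 𝒜, ∀ B ∈ 𝒜, N (A ∩ B) = min (N A) (N B))
    {ι : Type*} (S : Finset ι) (hS : S.Nonempty) (B : ι → Set Ω)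
    (h : ∀ i ∈ S, B i ∈ 𝒜) :
    N (⋂ i ∈ S, B i) = S.inf' hS (fun i => N (B i)) := by
  classical
  induction S using Finset.induction with
  | empty => exact absurd hS (by simp)
  | @insert a s ha ih =>
    rcases s.eq_empty_or_nonempty with rfl | hs
    · simp
    · rw [Finset.set_biInter_insert,
        hmin _ (h a (Finset.mem_insert_self a s))
          _ (biInter_mem' hUniv hinter s B fun i hi => h i (Finset.mem_insert_of_mem hi)),
        ih hs fun i hi => h i (Finset.mem_insert_of_mem hi), Finset.inf'_insert hs]

/-- The chain set `D_k = ⋃_{t ≤ k} C (σ t)`. -/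
private abbrev chD {Ω : Type*} {m : ℕ} (C : Fin m → Set Ω) (σ : Equiv.Perm (Fin m))
    (k : Fin m) : Set Ω :=
  ⋃ t ∈ Finset.Iic k, C (σ t)

private lemma chD_def {Ω : Type*} {m : ℕ} (C : Fin m → Set Ω) (σ : Equiv.Perm (Fin m))
    (k : Fin m) : (⋃ t ∈ Finset.Iic k, C (σ t)) = chD C σ k := rfl

theorem stmt_16 {Ω : Type*} [Nonempty Ω] (𝒜 : Finset (Set Ω))
    (hEmp : ∅ ∈ 𝒜) (hUniv : Set.univ ∈ 𝒜)
    (hcompl : ∀ A ∈ 𝒜, Aᶜ ∈ 𝒜)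
    (hinter : ∀ A ∈ 𝒜, ∀ B ∈ 𝒜, A ∩ B ∈ 𝒜)
    (hunion : ∀ A ∈ 𝒜, ∀ B ∈ 𝒜, A ∪ B ∈ 𝒜)
    {m : ℕ} (C : Fin m → Set Ω) (hCinj : Function.Injective C)
    (hatom : ∀ r, IsAtomOf 𝒜 (C r))
    (hall : ∀ A : Set Ω, IsAtomOf 𝒜 A → ∃ r, A = C r)
    (N : Set Ω → ℝ) (hN01 : ∀ A ∈ 𝒜, N A ∈ Set.Icc (0 : ℝ) 1) :
    (N ∅ = 0 ∧ N Set.univ = 1 ∧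
        ∀ A ∈ 𝒜, ∀ B ∈ 𝒜, N (A ∩ B) = min (N A) (N B)) ↔
      ∃ σ : Equiv.Perm (Fin m), ∃ x : Fin m → ℝ,
        (∀ r, 0 ≤ x r) ∧ (∑ r, x r) = 1 ∧
        ∀ A ∈ 𝒜, N A =
          ∑ r ∈ Finset.univ.filter
            (fun r : Fin m => (⋃ t ∈ Finset.Iic r, C (σ t)) ⊆ A), x r := by
  classical
  -- basic structural facts about atoms
  have hCne : ∀ r, (C r).Nonempty := fun r => Set.nonempty_iff_ne_empty.2 (hatom r).2.1
  have hdisj : ∀ r s : Fin m, r ≠ s → C r ∩ C s = ∅ := by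
    intro r s hrs
    rcases (hatom r).2.2 _ (hinter _ (hatom r).1 _ (hatom s).1) Set.inter_subset_left with h | h
    · exact h
    · exfalso
      have hsub : C r ⊆ C s := by rw [← h]; exact Set.inter_subset_right
      rcases (hatom s).2.2 _ (hatom r).1 hsub with h2 | h2
      · exact (hatom r).2.1 h2
      · exact hrs (hCinj h2)
  have hcover : ∀ A ∈ 𝒜, ∀ ω ∈ A, ∃ r, ω ∈ C r ∧ C r ⊆ A := by
    intro A hA ω hω
    set T : Finset (Set Ω) := 𝒜.filter (fun B => ω ∈ B) with hT
    have hE𝒜 : (⋂ B ∈ T, B) ∈ 𝒜 :=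
      biInter_mem' hUniv hinter T (fun B => B) (fun B hB => (Finset.mem_filter.1 hB).1)
    have hωE : ω ∈ ⋂ B ∈ T, B := Set.mem_iInter₂.2 fun B hB => (Finset.mem_filter.1 hB).2
    have hatomE : IsAtomOf 𝒜 (⋂ B ∈ T, B) := by
      refine ⟨hE𝒜, (Set.nonempty_of_mem hωE).ne_empty, ?_⟩
      intro B hB hBE
      by_cases hωB : ω ∈ B
      · right
        exact subset_antisymm hBE (Set.iInter₂_subset B (Finset.mem_filter.2 ⟨hB, hωB⟩))
      · left
        have hsub : (⋂ B' ∈ T, B') ⊆ Bᶜ :=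
          Set.iInter₂_subset Bᶜ (Finset.mem_filter.2 ⟨hcompl B hB, hωB⟩)
        exact Set.eq_empty_iff_forall_notMem.2 fun b hb => hsub (hBE hb) hb
    obtain ⟨r, hr⟩ := hall _ hatomE
    refine ⟨r, ?_, ?_⟩
    · rw [← hr]; exact hωE
    · rw [← hr]; exact Set.iInter₂_subset A (Finset.mem_filter.2 ⟨hA, hω⟩)
  have hsplit : ∀ A ∈ 𝒜, ∀ r : Fin m, ¬ C r ⊆ A → C r ⊆ Aᶜ := by
    intro A hA r hnsub
    rcases (hatom r).2.2 _ (hinter _ (hatom r).1 _ hA) Set.inter_subset_left with h | h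
    · intro ω hω hωA
      have : ω ∈ C r ∩ A := ⟨hω, hωA⟩
      rw [h] at this
      exact this
    · exact absurd (by rw [← h]; exact Set.inter_subset_right) hnsub
  have hm : 0 < m := by
    obtain ⟨r, -, -⟩ := hcover Set.univ hUniv (Classical.arbitrary Ω) (Set.mem_univ _)
    exact r.pos
  -- facts about chains, for an arbitrary permutation
  have hD𝒜 : ∀ (σ : Equiv.Perm (Fin m)) (k : Fin m), chD C σ k ∈ 𝒜 := fun σ k =>
    biUnion_mem' hEmp hunion _ _ (fun t _ => (hatom (σ t)).1)
  have hDmono : ∀ (σ : Equiv.Perm (Fin m)) (k l : Fin m), k ≤ l → chD C σ k ⊆ chD C σ l := by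
    intro σ k l hkl
    exact Set.iUnion₂_subset fun t ht =>
      Set.subset_iUnion₂ (s := fun t _ => C (σ t)) t
        (Finset.mem_Iic.2 (le_trans (Finset.mem_Iic.1 ht) hkl))
  have hDne : ∀ (σ : Equiv.Perm (Fin m)) (k : Fin m), (chD C σ k).Nonempty := fun σ k =>
    Set.Nonempty.mono
      (Set.subset_iUnion₂ (s := fun t _ => C (σ t)) k (Finset.mem_Iic.2 le_rfl)) (hCne (σ k))
  constructor
  · -- forward direction
    rintro ⟨h0, h1, hmin⟩
    have hmono : ∀ A ∈ 𝒜, ∀ B ∈ 𝒜, A ⊆ B → N A ≤ N B := by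
      intro A hA B hB hAB
      have h := hmin A hA B hB
      rw [Set.inter_eq_left.2 hAB] at h
      rw [h]; exact min_le_right _ _
    obtain ⟨σ, hgm⟩ : ∃ σ : Equiv.Perm (Fin m), Monotone (fun t => N ((C (σ t))ᶜ)) :=
      ⟨Tuple.sort (fun r => N ((C r)ᶜ)), fun a b h =>
        Tuple.monotone_sort (fun r => N ((C r)ᶜ)) h⟩
    -- complement representation of the chain
    have hDc : ∀ k : Fin m, chD C σ k = ⋂ t ∈ Finset.Ioi k, (C (σ t))ᶜ := by
      intro k
      ext ω
      simp only [chD, Set.mem_iUnion, Set.mem_iInter, Finset.mem_Iic, Finset.mem_Ioi,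
        Set.mem_compl_iff, exists_prop]
      constructor
      · rintro ⟨s, hsk, hωs⟩ t hkt hωt
        have hst : s ≠ t := (lt_of_le_of_lt hsk hkt).ne
        exact Set.eq_empty_iff_forall_notMem.1
          (hdisj (σ s) (σ t) (fun h => hst (σ.injective h))) ω ⟨hωs, hωt⟩
      · intro h
        obtain ⟨j, hωj, -⟩ := hcover Set.univ hUniv ω (Set.mem_univ ω)
        have hjt : C (σ (σ.symm j)) = C j := by rw [Equiv.apply_symm_apply]
        by_cases hkt : k < σ.symm j
        · exact absurd (hjt ▸ hωj) (h _ hkt)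
        · exact ⟨σ.symm j, not_lt.1 hkt, hjt ▸ hωj⟩
    have hND : ∀ (k : Fin m) (hne' : (Finset.Ioi k).Nonempty),
        N (chD C σ k) = (Finset.Ioi k).inf' hne' (fun t => N ((C (σ t))ᶜ)) := by
      intro k hne'
      rw [hDc k]
      exact N_biInter' hUniv hinter hmin _ hne' _ (fun t _ => hcompl _ (hatom (σ t)).1)
    have hDtop : chD C σ ⟨m - 1, by omega⟩ = Set.univ := by
      rw [hDc]
      have hIoi : Finset.Ioi (⟨m - 1, by omega⟩ : Fin m) = ∅ := by
        ext t
        simp only [Finset.mem_Ioi, Finset.notMem_empty, iff_false, not_lt, Fin.le_def]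
        omega
      rw [hIoi]
      simp
    obtain ⟨f, hf0, hfpos⟩ : ∃ f : ℕ → ℝ, f 0 = 0 ∧
        ∀ i, ∀ h1 : 0 < i, ∀ h2 : i ≤ m, f i = N (chD C σ ⟨i - 1, by omega⟩) :=
      ⟨fun i => if h : 0 < i ∧ i ≤ m then N (chD C σ ⟨i - 1, by omega⟩) else 0,
        by simp, fun i h1 h2 => dif_pos ⟨h1, h2⟩⟩
    have hfsucc : ∀ r : Fin m, f (r.val + 1) = N (chD C σ r) := by
      intro r
      have e : (⟨r.val + 1 - 1, by omega⟩ : Fin m) = r := Fin.ext (by simp)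
      rw [hfpos (r.val + 1) (Nat.succ_pos _) r.isLt, e]
    have hx0 : ∀ r : Fin m, 0 ≤ f (r.val + 1) - f r.val := by
      intro r
      rcases Nat.eq_zero_or_pos r.val with h | h
      · rw [hfsucc r, h, hf0]
        have := hmono ∅ hEmp _ (hD𝒜 σ r) (Set.empty_subset _)
        rw [h0] at this
        linarith
      · rw [hfsucc r, hfpos r.val h (le_of_lt r.isLt)]
        have hle : (⟨r.val - 1, by omega⟩ : Fin m) ≤ r := by
          simp only [Fin.le_def]; omega
        have := hmono _ (hD𝒜 σ _) _ (hD𝒜 σ r) (hDmono σ _ r hle)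
        linarith
    -- partial sums
    have hsum' : ∀ k : ℕ, k ≤ m →
        ∑ r ∈ Finset.univ.filter (fun r : Fin m => r.val < k),
          (f (r.val + 1) - f r.val) = f k := by
      intro k
      induction k with
      | zero =>
        intro _
        rw [hf0]
        convert Finset.sum_empty
        ext r
        simp
      | succ k ih =>
        intro hk
        have hik : k < m := hk
        have hins : Finset.univ.filter (fun r : Fin m => r.val < k + 1) =
            insert (⟨k, hik⟩ : Fin m)
              (Finset.univ.filter (fun r : Fin m => r.val < k)) := by
          ext r
          simp only [Finset.mem_filter, Finset.mem_univ, true_and, Finset.mem_insert,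
            Fin.ext_iff]
          omega
        rw [hins, Finset.sum_insert (by simp), ih (le_of_lt hik)]
        ring
    refine ⟨σ, fun r => f (r.val + 1) - f r.val, hx0, ?_, ?_⟩
    · have huniv : (Finset.univ : Finset (Fin m)) =
          Finset.univ.filter (fun r : Fin m => r.val < m) := by
        ext r; simp [r.isLt]
      rw [huniv, hsum' m le_rfl, hfpos m hm le_rfl, hDtop, h1]
    · intro A hA
      simp only [chD_def]
      by_cases hS : ∀ t : Fin m, C (σ t) ⊆ A
      · have hAuniv : A = Set.univ := by
          refine Set.eq_univ_of_univ_subset fun ω _ => ?_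
          obtain ⟨j, hωj, -⟩ := hcover Set.univ hUniv ω (Set.mem_univ ω)
          exact hS (σ.symm j) ((Equiv.apply_symm_apply σ j).symm ▸ hωj)
        subst hAuniv
        have hfu : Finset.univ.filter (fun r : Fin m => chD C σ r ⊆ Set.univ) =
            Finset.univ.filter (fun r : Fin m => r.val < m) := by
          ext r; simp [Set.subset_univ, r.isLt]
        rw [hfu, hsum' m le_rfl, hfpos m hm le_rfl, hDtop]
      · push_neg at hS
        have hSne : (Finset.univ.filter (fun t : Fin m => ¬ C (σ t) ⊆ A)).Nonempty :=
          ⟨hS.choose, by simp [hS.choose_spec]⟩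
        set t0 : Fin m := (Finset.univ.filter (fun t : Fin m => ¬ C (σ t) ⊆ A)).min' hSne
          with ht0def
        have ht0S : ¬ C (σ t0) ⊆ A := by
          have := Finset.min'_mem _ hSne
          rw [← ht0def] at this
          simpa using this
        have hminlt : ∀ t : Fin m, t < t0 → C (σ t) ⊆ A := by
          intro t ht
          by_contra hc
          exact absurd (Finset.min'_le _ t (by simp [hc])) (not_le.2 ht)
        have hfilter : Finset.univ.filter (fun r : Fin m => chD C σ r ⊆ A) =
            Finset.univ.filter (fun r : Fin m => r.val < t0.val) := by
          ext r
          simp only [Finset.mem_filter, Finset.mem_univ, true_and]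
          constructor
          · intro h
            by_contra hc
            push_neg at hc
            have ht0r : t0 ≤ r := hc
            exact ht0S ((Set.subset_iUnion₂ (s := fun t _ => C (σ t)) t0
              (Finset.mem_Iic.2 ht0r)).trans h)
          · intro h
            exact Set.iUnion₂_subset fun t ht =>
              hminlt t (lt_of_le_of_lt (Finset.mem_Iic.1 ht) h)
        rw [hfilter, hsum' t0.val (le_of_lt t0.isLt)]
        have hAc : N A ≤ N ((C (σ t0))ᶜ) :=
          hmono A hA _ (hcompl _ (hatom (σ t0)).1)
            (Set.subset_compl_comm.1 (hsplit A hA _ ht0S))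
        rcases Nat.eq_zero_or_pos t0.val with hz | hz
        · rw [hz, hf0]
          have hg0 : N ((C (σ t0))ᶜ) ≤ 0 := by
            have hint : (⋂ t ∈ (Finset.univ : Finset (Fin m)), (C (σ t))ᶜ) = ∅ := by
              ext ω
              simp only [Set.mem_iInter, Set.mem_compl_iff, Finset.mem_univ, forall_true_left,
                Set.mem_empty_iff_false, iff_false, not_forall, not_not]
              obtain ⟨j, hωj, -⟩ := hcover Set.univ hUniv ω (Set.mem_univ ω)
              exact ⟨σ.symm j, (Equiv.apply_symm_apply σ j).symm ▸ hωj⟩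
            have hNi := N_biInter' hUniv hinter hmin Finset.univ
              ⟨t0, Finset.mem_univ _⟩ (fun t => (C (σ t))ᶜ)
              (fun t _ => hcompl _ (hatom (σ t)).1)
            rw [hint, h0] at hNi
            have hle : N ((C (σ t0))ᶜ) ≤
                Finset.univ.inf' ⟨t0, Finset.mem_univ _⟩ (fun t => N ((C (σ t))ᶜ)) :=
              Finset.le_inf' _ _ fun t _ => hgm (by simp only [Fin.le_def]; omega)
            linarith
          have hA0 : 0 ≤ N A := by
            have := hmono ∅ hEmp A hA (Set.empty_subset _)
            rw [h0] at this
            linarith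
          linarith
        · rw [hfpos t0.val hz (le_of_lt t0.isLt)]
          have hlt : (⟨t0.val - 1, by omega⟩ : Fin m) < t0 := by
            simp only [Fin.lt_def]; omega
          have hsubA : chD C σ ⟨t0.val - 1, by omega⟩ ⊆ A :=
            Set.iUnion₂_subset fun t ht =>
              hminlt t (lt_of_le_of_lt (Finset.mem_Iic.1 ht) hlt)
          have h4 : N (chD C σ ⟨t0.val - 1, by omega⟩) ≤ N A :=
            hmono _ (hD𝒜 σ _) _ hA hsubA
          have h3 : N ((C (σ t0))ᶜ) ≤ N (chD C σ ⟨t0.val - 1, by omega⟩) := by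
            rw [hND ⟨t0.val - 1, by omega⟩ ⟨t0, Finset.mem_Ioi.2 hlt⟩]
            refine Finset.le_inf' _ _ fun t ht => hgm ?_
            have := Finset.mem_Ioi.1 ht
            simp only [Fin.lt_def] at this
            simp only [Fin.le_def]
            omega
          linarith
  · -- backward direction
    rintro ⟨σ, x, hx0, hxs, hrep⟩
    simp only [chD_def] at hrep
    have hfilter_empty : Finset.univ.filter (fun r : Fin m => chD C σ r ⊆ (∅ : Set Ω)) = ∅ := by
      ext r
      simp only [Finset.mem_filter, Finset.mem_univ, true_and, Finset.notMem_empty, iff_false]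
      intro h
      exact (hDne σ r).ne_empty (Set.subset_empty_iff.1 h)
    have hfilter_univ : Finset.univ.filter (fun r : Fin m => chD C σ r ⊆ Set.univ) =
        Finset.univ := by
      ext r; simp [Set.subset_univ]
    refine ⟨?_, ?_, ?_⟩
    · rw [hrep ∅ hEmp, hfilter_empty, Finset.sum_empty]
    · rw [hrep Set.univ hUniv, hfilter_univ, hxs]
    · intro A hA B hB
      rw [hrep _ (hinter A hA B hB), hrep A hA, hrep B hB]
      have hFint : Finset.univ.filter (fun r : Fin m => chD C σ r ⊆ A ∩ B) =
          (Finset.univ.filter (fun r : Fin m => chD C σ r ⊆ A)) ∩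
            (Finset.univ.filter (fun r : Fin m => chD C σ r ⊆ B)) := by
        ext r
        simp only [Finset.mem_filter, Finset.mem_univ, true_and, Finset.mem_inter,
          Set.subset_inter_iff]
      have htot : (Finset.univ.filter (fun r : Fin m => chD C σ r ⊆ A)) ⊆
            (Finset.univ.filter (fun r : Fin m => chD C σ r ⊆ B)) ∨
          (Finset.univ.filter (fun r : Fin m => chD C σ r ⊆ B)) ⊆
            (Finset.univ.filter (fun r : Fin m => chD C σ r ⊆ A)) := by
        by_contra hc
        push_neg at hc
        obtain ⟨a, haA, haB⟩ := Finset.not_subset.1 hc.1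
        obtain ⟨b, hbB, hbA⟩ := Finset.not_subset.1 hc.2
        simp only [Finset.mem_filter, Finset.mem_univ, true_and] at haA haB hbB hbA
        rcases le_total a b with hab | hab
        · exact haB ((hDmono σ a b hab).trans hbB)
        · exact hbA ((hDmono σ b a hab).trans haA)
      rcases htot with h | h
      · rw [hFint, Finset.inter_eq_left.2 h]
        exact (min_eq_left
          (Finset.sum_le_sum_of_subset_of_nonneg h (fun i _ _ => hx0 i))).symm
      · rw [hFint, Finset.inter_eq_right.2 h]
        exact (min_eq_right
          (Finset.sum_le_sum_of_subset_of_nonneg h (fun i _ _ => hx0 i))).symm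
end

section
/- Probability coherence as membership in the convex hull of atom-indicator vectors: a finite assessment P : {E₁,…,E_n} → [0,1] extends to a finitely additive probability on algebra({E₁,…,E_n}) if and only if the vector (P(E₁),…,P(E_n)) belongs to the convex hull of the vectors (1_{E_1}(C),…,1_{E_n}(C)) as C ranges over the atoms of algebra({E₁,…,E_n}), where 1_{E_i}(C) = 1 if C ⊆ E_i and 0 otherwise. -/
open scoped Classical

section Aux

variable {Ω : Type*}

lemma aux_sUnion_mem {𝒜 : Set (Set Ω)} (h : IsSetAlgebra 𝒜)
    (T : Finset (Set Ω)) : (∀ A ∈ T, A ∈ 𝒜) → ⋃₀ (↑T : Set (Set Ω)) ∈ 𝒜 := by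
  classical
  induction T using Finset.induction_on with
  | empty => intro _; simpa using h.1
  | insert _ _ hAs ih =>
    intro hT
    rename_i A s
    rw [Finset.coe_insert, Set.sUnion_insert]
    exact h.2.2.2.2 _ (hT _ (Finset.mem_insert_self _ _)) _
      (ih fun B hB => hT _ (Finset.mem_insert_of_mem hB))

lemma aux_sInter_mem {𝒜 : Set (Set Ω)} (h : IsSetAlgebra 𝒜)
    (T : Finset (Set Ω)) : (∀ A ∈ T, A ∈ 𝒜) → ⋂₀ (↑T : Set (Set Ω)) ∈ 𝒜 := by
  classical
  induction T using Finset.induction_on with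
  | empty => intro _; simpa using h.2.1
  | insert _ _ hAs ih =>
    intro hT
    rename_i A s
    rw [Finset.coe_insert, Set.sInter_insert]
    exact h.2.2.2.1 _ (hT _ (Finset.mem_insert_self _ _)) _
      (ih fun B hB => hT _ (Finset.mem_insert_of_mem hB))

lemma atom_subset_or_disjoint {𝒜 : Finset (Set Ω)} (h : IsSetAlgebra (↑𝒜 : Set (Set Ω)))
    {C A : Set Ω} (hC : IsAtomOf 𝒜 C) (hA : A ∈ 𝒜) : C ⊆ A ∨ C ∩ A = ∅ := by
  have hmem : C ∩ A ∈ 𝒜 := by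
    have := h.2.2.2.1 C (Finset.mem_coe.mpr hC.1) A (Finset.mem_coe.mpr hA)
    exact Finset.mem_coe.mp this
  rcases hC.2.2 _ hmem Set.inter_subset_left with h0 | h1
  · exact Or.inr h0
  · exact Or.inl (Set.inter_eq_left.mp h1)

lemma atoms_disjoint {𝒜 : Finset (Set Ω)} (h : IsSetAlgebra (↑𝒜 : Set (Set Ω)))
    {C C' : Set Ω} (hC : IsAtomOf 𝒜 C) (hC' : IsAtomOf 𝒜 C') (hne : C ≠ C') :
    C ∩ C' = ∅ := by
  rcases atom_subset_or_disjoint h hC hC'.1 with hsub | hdisj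
  · rcases hC'.2.2 _ hC.1 hsub with h0 | h1
    · exact absurd h0 hC.2.1
    · exact absurd h1 hne
  · exact hdisj

lemma exists_atom {𝒜 : Finset (Set Ω)} (h : IsSetAlgebra (↑𝒜 : Set (Set Ω))) (ω : Ω) :
    ∃ C, IsAtomOf 𝒜 C ∧ ω ∈ C ∧ ∀ A ∈ 𝒜, ω ∈ A → C ⊆ A := by
  classical
  set T := 𝒜.filter (fun A => ω ∈ A) with hTdef
  set C := ⋂₀ (↑T : Set (Set Ω)) with hCdef
  have hCmem : C ∈ 𝒜 := by
    have := aux_sInter_mem h T (fun A hA => Finset.mem_coe.mpr (Finset.mem_filter.mp hA).1)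
    exact Finset.mem_coe.mp this
  have hωC : ω ∈ C := by
    intro A hA
    exact (Finset.mem_filter.mp (Finset.mem_coe.mp hA)).2
  have hsub : ∀ A ∈ 𝒜, ω ∈ A → C ⊆ A := fun A hA hωA =>
    Set.sInter_subset_of_mem (Finset.mem_coe.mpr (Finset.mem_filter.mpr ⟨hA, hωA⟩))
  refine ⟨C, ⟨hCmem, ?_, ?_⟩, hωC, hsub⟩
  · intro h0
    exact absurd (h0 ▸ hωC) (Set.notMem_empty ω)
  · intro B hB hBC
    by_cases hωB : ω ∈ B
    · exact Or.inr (le_antisymm hBC (hsub B hB hωB))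
    · left
      have hcompl : Bᶜ ∈ 𝒜 := Finset.mem_coe.mp (h.2.2.1 B (Finset.mem_coe.mpr hB))
      have hCB : C ⊆ Bᶜ := hsub _ hcompl hωB
      exact Set.eq_empty_iff_forall_notMem.mpr fun x hx => (hCB (hBC hx)) hx

lemma P_sUnion {𝒜 : Set (Set Ω)} {P : Set Ω → ℝ} (h : IsSetAlgebra 𝒜) (hP : IsFAProb 𝒜 P)
    (T : Finset (Set Ω)) :
    (∀ A ∈ T, A ∈ 𝒜) → (∀ A ∈ T, ∀ B ∈ T, A ≠ B → A ∩ B = ∅) →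
      P (⋃₀ (↑T : Set (Set Ω))) = ∑ A ∈ T, P A := by
  classical
  induction T using Finset.induction_on with
  | empty => intro _ _; simpa using hP.2.1
  | insert _ _ hAs ih =>
    intro hmem hdisj
    rename_i A s
    rw [Finset.coe_insert, Set.sUnion_insert, Finset.sum_insert hAs]
    have hsmem : ∀ B ∈ s, B ∈ 𝒜 := fun B hB => hmem _ (Finset.mem_insert_of_mem hB)
    have hsU : ⋃₀ (↑s : Set (Set Ω)) ∈ 𝒜 := aux_sUnion_mem h s hsmem
    have hdisj' : A ∩ ⋃₀ (↑s : Set (Set Ω)) = ∅ := by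
      ext x
      simp only [Set.mem_inter_iff, Set.mem_sUnion, Set.mem_empty_iff_false, iff_false, not_and]
      rintro hxA ⟨B, hB, hxB⟩
      have hBs : B ∈ s := Finset.mem_coe.mp hB
      have hAB : A ≠ B := by rintro rfl; exact hAs hBs
      have hd := hdisj A (Finset.mem_insert_self _ _) B (Finset.mem_insert_of_mem hBs) hAB
      exact absurd (show x ∈ A ∩ B from ⟨hxA, hxB⟩) (by simp [hd])
    rw [hP.2.2.2 A (hmem _ (Finset.mem_insert_self _ _)) _ hsU hdisj',
      ih hsmem (fun B hB B' hB' => hdisj _ (Finset.mem_insert_of_mem hB) _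
        (Finset.mem_insert_of_mem hB'))]

lemma P_eq_sum_atoms {𝒜 : Finset (Set Ω)} {P' : Set Ω → ℝ}
    (h : IsSetAlgebra (↑𝒜 : Set (Set Ω))) (hP : IsFAProb (↑𝒜) P')
    {A : Set Ω} (hA : A ∈ 𝒜) :
    P' A = ∑ C ∈ 𝒜.filter (fun C => IsAtomOf 𝒜 C ∧ C ⊆ A), P' C := by
  classical
  set T := 𝒜.filter (fun C => IsAtomOf 𝒜 C ∧ C ⊆ A) with hTdef
  have hUnion : ⋃₀ (↑T : Set (Set Ω)) = A := by
    apply Set.Subset.antisymm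
    · rintro x ⟨C, hC, hxC⟩
      exact (Finset.mem_filter.mp (Finset.mem_coe.mp hC)).2.2 hxC
    · intro x hx
      obtain ⟨C, hCat, hxC, hmin⟩ := exists_atom h x
      exact ⟨C, Finset.mem_coe.mpr (Finset.mem_filter.mpr ⟨hCat.1, hCat, hmin A hA hx⟩), hxC⟩
  rw [← hUnion]
  exact P_sUnion h hP T
    (fun C hC => Finset.mem_coe.mpr (Finset.mem_filter.mp hC).1)
    (fun C hC C' hC' hne =>
      atoms_disjoint h (Finset.mem_filter.mp hC).2.1 (Finset.mem_filter.mp hC').2.1 hne)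

end Aux

theorem stmt_17 {Ω : Type*} [Nonempty Ω] {n : ℕ}
    (E : Fin n → Set Ω) (P : Fin n → ℝ) (hP : ∀ i, P i ∈ Set.Icc (0 : ℝ) 1)
    (𝒜 : Finset (Set Ω)) (h𝒜 : IsGenAlgebraOf 𝒜 (Set.range E)) :
    (∃ P' : Set Ω → ℝ, IsFAProb (↑𝒜) P' ∧ ∀ i, P' (E i) = P i) ↔
      P ∈ convexHull ℝ
        {v : Fin n → ℝ | ∃ C : Set Ω, IsAtomOf 𝒜 C ∧
          v = fun i => if C ⊆ E i then (1 : ℝ) else 0} := by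
  classical
  have halg := h𝒜.1
  have hE : ∀ i, E i ∈ 𝒜 := fun i => Finset.mem_coe.mp (h𝒜.2.1 ⟨i, rfl⟩)
  constructor
  · rintro ⟨P', hP', hPE⟩
    set atomsA := 𝒜.filter (fun C => IsAtomOf 𝒜 C) with hatoms
    set v : Set Ω → (Fin n → ℝ) := fun C => fun i => if C ⊆ E i then 1 else 0 with hv
    have hw0 : ∀ C ∈ atomsA, 0 ≤ P' C := fun C hC =>
      (hP'.1 C (Finset.mem_coe.mpr (Finset.mem_filter.mp hC).1)).1
    have hfilter_univ : 𝒜.filter (fun C => IsAtomOf 𝒜 C ∧ C ⊆ Set.univ) = atomsA :=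
      Finset.filter_congr (fun C _ => by simp [Set.subset_univ])
    have hunivmem : Set.univ ∈ 𝒜 := Finset.mem_coe.mp halg.2.1
    have hsum : ∑ C ∈ atomsA, P' C = 1 := by
      have h1 := P_eq_sum_atoms halg hP' hunivmem
      rw [hP'.2.2.1, hfilter_univ] at h1
      exact h1.symm
    have hfilterEi : ∀ i, 𝒜.filter (fun C => IsAtomOf 𝒜 C ∧ C ⊆ E i)
        = atomsA.filter (fun C => C ⊆ E i) := by
      intro i
      rw [hatoms, Finset.filter_filter]
    have hP_eq : P = atomsA.centerMass P' v := by
      rw [Finset.centerMass_eq_of_sum_1 _ _ hsum]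
      funext i
      rw [← hPE i, P_eq_sum_atoms halg hP' (hE i), hfilterEi i]
      rw [Finset.sum_filter]
      rw [Finset.sum_apply]
      apply Finset.sum_congr rfl
      intro C _
      by_cases hCE : C ⊆ E i <;> simp [hv, hCE]
    rw [hP_eq]
    exact Finset.centerMass_mem_convexHull _ hw0 (by rw [hsum]; norm_num)
      (fun C hC => ⟨C, (Finset.mem_filter.mp hC).2, rfl⟩)
  · intro hmem
    rw [convexHull_eq] at hmem
    obtain ⟨ι, t, w, z, hw0, hw1, hz, hzP⟩ := hmem
    have hCex : ∀ j, ∃ C : Set Ω, j ∈ t →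
        (IsAtomOf 𝒜 C ∧ z j = fun i => if C ⊆ E i then (1 : ℝ) else 0) := by
      intro j
      by_cases hj : j ∈ t
      · obtain ⟨C, h1, h2⟩ := hz j hj
        exact ⟨C, fun _ => ⟨h1, h2⟩⟩
      · exact ⟨∅, fun hc => absurd hc hj⟩
    choose C hC using hCex
    refine ⟨fun A => ∑ j ∈ t, w j * (if C j ⊆ A then 1 else 0), ⟨?_, ?_, ?_, ?_⟩, ?_⟩
    · intro A _
      constructor
      · exact Finset.sum_nonneg fun j hj => mul_nonneg (hw0 j hj) (by positivity)
      · calc ∑ j ∈ t, w j * (if C j ⊆ A then 1 else 0) ≤ ∑ j ∈ t, w j := by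
              apply Finset.sum_le_sum
              intro j hj
              by_cases hc : C j ⊆ A <;> simp [hc, hw0 j hj]
          _ = 1 := hw1
    · apply Finset.sum_eq_zero
      intro j hj
      have hne := ((hC j hj).1).2.1
      have : ¬ C j ⊆ ∅ := fun hsub => hne (Set.subset_empty_iff.mp hsub)
      simp [this]
    · simp [hw1]
    · intro A hA B hB hAB
      rw [← Finset.sum_add_distrib]
      apply Finset.sum_congr rfl
      intro j hj
      have hat := (hC j hj).1
      have hAmem : A ∈ 𝒜 := Finset.mem_coe.mp hA
      have hBmem : B ∈ 𝒜 := Finset.mem_coe.mp hB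
      obtain ⟨x, hx⟩ := Set.nonempty_iff_ne_empty.mpr hat.2.1
      rcases atom_subset_or_disjoint halg hat hAmem with hsA | hdA
      · have hnB : ¬ C j ⊆ B := by
          intro hsB
          have : x ∈ A ∩ B := ⟨hsA hx, hsB hx⟩
          rw [hAB] at this
          exact this
        have hsAB : C j ⊆ A ∪ B := fun y hy => Or.inl (hsA hy)
        simp [hsA, hnB, hsAB, mul_add]
      · rcases atom_subset_or_disjoint halg hat hBmem with hsB | hdB
        · have hnA : ¬ C j ⊆ A := by
            intro hsA
            have : x ∈ C j ∩ A := ⟨hx, hsA hx⟩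
            rw [hdA] at this
            exact this
          have hsAB : C j ⊆ A ∪ B := fun y hy => Or.inr (hsB hy)
          simp [hnA, hsB, hsAB, mul_add]
        · have hnA : ¬ C j ⊆ A := by
            intro hsA
            exact absurd (show x ∈ C j ∩ A from ⟨hx, hsA hx⟩) (by simp [hdA])
          have hnB : ¬ C j ⊆ B := by
            intro hsB
            exact absurd (show x ∈ C j ∩ B from ⟨hx, hsB hx⟩) (by simp [hdB])
          have hnAB : ¬ C j ⊆ A ∪ B := by
            intro hs
            rcases hs hx with h | h
            · exact absurd (show x ∈ C j ∩ A from ⟨hx, h⟩) (by simp [hdA])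
            · exact absurd (show x ∈ C j ∩ B from ⟨hx, h⟩) (by simp [hdB])
          simp [hnA, hnB, hnAB]
    · intro i
      have hPi : P i = ∑ j ∈ t, w j * z j i := by
        rw [← hzP, Finset.centerMass_eq_of_sum_1 _ _ hw1, Finset.sum_apply]
        simp [smul_eq_mul]
      rw [hPi]
      apply Finset.sum_congr rfl
      intro j hj
      rw [(hC j hj).2]
end
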